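/- arXiv:1212.0139 — 4 statements merged into one kernel-verified Lean document; each statement's English description precedes it below -/
import Mathlib

section
/- For every integer λ ≥ 2, E(N_{1:λ+1}²) > E(N_{1:λ}²), i.e. the second moment of the minimum of λ i.i.d. standard normal random variables is strictly increasing in λ for λ ≥ 2. -/
open MeasureTheory ProbabilityTheory Filter Real

/-- Law of the minimum (first order statistic) of `lam` i.i.d. standard normal
random variables. -/
noncomputable def minLaw (lam : ℕ) : Measure ℝ :=
  (Measure.pi fun _ : Fin lam => gaussianReal 0 1).map fun x => ⨅ i, x i

instance (lam : ℕ) : IsProbabilityMeasure (minLaw lam) := by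
  unfold minLaw
  exact Measure.isProbabilityMeasure_map
    ((Measurable.iInf fun i => measurable_pi_apply i).aemeasurable)

/-- Law of the selected step `(N_{1:λ}, N_2, …, N_n)`: independent coordinates, the
first coordinate distributed as the minimum of `lam` i.i.d. standard normals and the
other `n - 1` coordinates standard normal. -/
noncomputable def xiLaw (n lam : ℕ) : Measure (Fin n → ℝ) :=
  Measure.pi fun i => if (i : ℕ) = 0 then minLaw lam else gaussianReal 0 1

open Set ENNReal

lemma measurable_inf' (lam : ℕ) : Measurable (fun x : Fin lam → ℝ => ⨅ i, x i) :=
  Measurable.iInf fun i => measurable_pi_apply i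

lemma minLaw_Ioi (lam : ℕ) (hlam : lam ≠ 0) (t : ℝ) :
    minLaw lam (Ioi t) = gaussianReal 0 1 (Ioi t) ^ lam := by
  haveI : NeZero lam := ⟨hlam⟩
  unfold minLaw
  rw [Measure.map_apply (measurable_inf' lam) measurableSet_Ioi]
  have h : (fun x : Fin lam → ℝ => ⨅ i, x i) ⁻¹' (Ioi t) = Set.pi Set.univ fun _ => Ioi t := by
    ext x
    simp only [mem_preimage, mem_Ioi, Set.mem_pi, Set.mem_univ, forall_true_left]
    constructor
    · intro h i
      exact h.trans_le (ciInf_le (Set.finite_range x).bddBelow i)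
    · intro h
      obtain ⟨j, hj⟩ := Finite.exists_min x
      calc t < x j := h j
      _ ≤ ⨅ i, x i := le_ciInf hj
  rw [h, Measure.pi_pi]
  simp [Finset.prod_const]

lemma minLaw_Ici (lam : ℕ) (hlam : lam ≠ 0) (t : ℝ) :
    minLaw lam (Ici t) = gaussianReal 0 1 (Ici t) ^ lam := by
  haveI : NeZero lam := ⟨hlam⟩
  unfold minLaw
  rw [Measure.map_apply (measurable_inf' lam) measurableSet_Ici]
  have h : (fun x : Fin lam → ℝ => ⨅ i, x i) ⁻¹' (Ici t) = Set.pi Set.univ fun _ => Ici t := by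
    ext x
    simp only [mem_preimage, mem_Ici, Set.mem_pi, Set.mem_univ, forall_true_left]
    exact le_ciInf_iff (Set.finite_range x).bddBelow
  rw [h, Measure.pi_pi]
  simp [Finset.prod_const]

lemma minLaw_Iio (lam : ℕ) (hlam : lam ≠ 0) (t : ℝ) :
    minLaw lam (Iio t) = 1 - gaussianReal 0 1 (Ici t) ^ lam := by
  rw [← compl_Ici, measure_compl measurableSet_Ici (measure_ne_top _ _), measure_univ,
    minLaw_Ici lam hlam]

open MeasureTheory ProbabilityTheory Filter Real Set

lemma gauss_map_neg : (gaussianReal 0 1).map (fun x => (-1 : ℝ) * x) = gaussianReal 0 1 := by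
  rw [gaussianReal_map_const_mul]
  norm_num

lemma gauss_symm (t : ℝ) : gaussianReal 0 1 (Iio (-t)) = gaussianReal 0 1 (Ioi t) := by
  conv_lhs => rw [← gauss_map_neg]
  rw [Measure.map_apply (by fun_prop) measurableSet_Iio]
  congr 1
  ext x
  simp only [mem_preimage, mem_Iio, mem_Ioi]
  constructor <;> intro h <;> linarith

lemma gauss_pos {s : Set ℝ} (h : volume s ≠ 0) : gaussianReal 0 1 s ≠ 0 := by
  intro h0
  exact h (gaussianReal_absolutelyContinuous' 0 one_ne_zero h0)

lemma gauss_Ici_neg (t : ℝ) :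
    gaussianReal 0 1 (Ici (-t)) = 1 - gaussianReal 0 1 (Ioi t) := by
  have h1 : gaussianReal 0 1 (Iio (-t)) = 1 - gaussianReal 0 1 (Ici (-t)) := by
    rw [← compl_Ici, measure_compl measurableSet_Ici (measure_ne_top _ _), measure_univ]
  rw [gauss_symm] at h1
  have h2 : gaussianReal 0 1 (Ici (-t)) ≤ 1 := prob_le_one
  rw [← ENNReal.sub_sub_cancel ENNReal.one_ne_top h2, ← h1]

lemma gauss_half (t : ℝ) (ht : 0 < t) :
    (gaussianReal 0 1 (Ioi t)).toReal < 1/2 ∧ 0 < (gaussianReal 0 1 (Ioi t)).toReal := by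
  set μ := gaussianReal 0 1
  have hd1 : Disjoint (Iio (-t)) (Ioo (-t) t) := by
    rw [Set.disjoint_left]; intro x hx hx'; exact absurd hx'.1 (not_lt.2 hx.le)
  have hd2 : Disjoint (Ioi t) (Iio (-t) ∪ Ioo (-t) t) := by
    rw [Set.disjoint_left]; rintro x hx (hx' | hx')
    · simp only [mem_Ioi, mem_Iio] at *; linarith
    · exact absurd hx'.2 (not_lt.2 (le_of_lt hx))
  have key : μ (Ioi t) + (μ (Iio (-t)) + μ (Ioo (-t) t)) ≤ 1 := by
    rw [← measure_union hd1 measurableSet_Ioo, ← measure_union hd2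
      ((measurableSet_Iio).union measurableSet_Ioo)]
    exact prob_le_one
  rw [gauss_symm] at key
  have hm : μ (Ioo (-t) t) ≠ 0 := gauss_pos (by
    rw [Real.volume_Ioo]
    simp only [ne_eq, ENNReal.ofReal_eq_zero, not_le]
    linarith)
  have hfin : μ (Ioi t) ≠ ⊤ := measure_ne_top _ _
  have hlt : μ (Ioi t) + μ (Ioi t) < 1 := by
    calc μ (Ioi t) + μ (Ioi t)
        < μ (Ioi t) + μ (Ioi t) + μ (Ioo (-t) t) :=
          ENNReal.lt_add_right (by finiteness) hm
      _ ≤ 1 := by rw [add_assoc]; exact key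
  constructor
  · have := ENNReal.toReal_lt_toReal (by finiteness) ENNReal.one_ne_top |>.mpr hlt
    rw [ENNReal.toReal_add hfin hfin, ENNReal.toReal_one] at this
    linarith
  · have h0 : μ (Ioi t) ≠ 0 := gauss_pos (by rw [Real.volume_Ioi]; simp)
    exact ENNReal.toReal_pos h0 hfin

lemma abs_tail_eq (t : ℝ) (ht : 0 < t) : {x : ℝ | t < |x|} = Iio (-t) ∪ Ioi t := by
  ext x
  simp only [mem_setOf_eq, lt_abs, mem_union, mem_Iio, mem_Ioi]
  constructor <;> rintro (h | h)
  · right; exact h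
  · left; linarith
  · right; linarith
  · left; exact h

lemma minLaw_abs_tail (lam : ℕ) (hlam : lam ≠ 0) (t : ℝ) (ht : 0 < t) :
    minLaw lam {x : ℝ | t < |x|} =
      ENNReal.ofReal ((1 - (1 - (gaussianReal 0 1 (Ioi t)).toReal) ^ lam)
        + (gaussianReal 0 1 (Ioi t)).toReal ^ lam) := by
  set a := (gaussianReal 0 1 (Ioi t)).toReal with ha
  have ha0 : 0 ≤ a := ENNReal.toReal_nonneg
  have ha1 : a ≤ 1 := by
    rw [ha]
    exact ENNReal.toReal_le_of_le_ofReal zero_le_one (by simpa using prob_le_one)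
  have haofReal : gaussianReal 0 1 (Ioi t) = ENNReal.ofReal a :=
    (ENNReal.ofReal_toReal (measure_ne_top _ _)).symm
  have hdisj : Disjoint (Iio (-t)) (Ioi t) := by
    rw [Set.disjoint_left]
    intro x hx hx'
    simp only [mem_Iio, mem_Ioi] at *
    linarith
  rw [abs_tail_eq t ht, measure_union hdisj measurableSet_Ioi, minLaw_Iio lam hlam,
    minLaw_Ioi lam hlam, gauss_Ici_neg, haofReal]
  have h1 : (1 : ℝ≥0∞) - ENNReal.ofReal a = ENNReal.ofReal (1 - a) := by
    rw [ENNReal.ofReal_sub _ ha0, ENNReal.ofReal_one]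
  rw [h1, ← ENNReal.ofReal_pow (by linarith), ← ENNReal.ofReal_pow ha0,
    ← ENNReal.ofReal_one, ← ENNReal.ofReal_sub _ (pow_nonneg (by linarith) _), ← ENNReal.ofReal_add
      (by nlinarith [pow_le_one₀ (by linarith : (0:ℝ) ≤ 1 - a) (by linarith : 1 - a ≤ 1) (n := lam)])
      (by positivity)]

lemma meas_tail (m : Measure ℝ) : Measurable (fun t : ℝ => m {x : ℝ | t < |x|}) := by
  have h : Antitone (fun t : ℝ => m {x : ℝ | t < |x|}) := by
    intro s t hst
    apply measure_mono
    intro x hx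
    exact lt_of_le_of_lt hst hx
  exact h.measurable

lemma second_moment_eq (m : Measure ℝ) :
    ∫⁻ x, ENNReal.ofReal (x ^ 2) ∂m =
      2 * ∫⁻ t in Ioi 0, m {x : ℝ | t < |x|} * ENNReal.ofReal t := by
  have h := lintegral_rpow_eq_lintegral_meas_lt_mul m (f := fun x => |x|)
    (Filter.Eventually.of_forall fun x => abs_nonneg x) measurable_abs.aemeasurable
    (p := 2) two_pos
  have h1 : ∀ x : ℝ, ENNReal.ofReal (|x| ^ (2:ℝ)) = ENNReal.ofReal (x ^ 2) := fun x => by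
    rw [Real.rpow_two, sq_abs]
  have h2 : ∀ t : ℝ, ENNReal.ofReal (t ^ ((2:ℝ) - 1)) = ENNReal.ofReal t := fun t => by
    norm_num
  simp_rw [h1, h2] at h
  rw [h]
  norm_num

lemma gauss_sq_fin : ∫⁻ x, ENNReal.ofReal (x ^ 2) ∂(gaussianReal 0 1) ≠ ⊤ := by
  rw [gaussianReal_of_var_ne_zero 0 one_ne_zero,
    lintegral_withDensity_eq_lintegral_mul _ (measurable_gaussianPDF 0 1) (by fun_prop)]
  have heq : ∀ x : ℝ, (gaussianPDF 0 1 * fun x => ENNReal.ofReal (x ^ 2)) x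
      = ENNReal.ofReal (gaussianPDFReal 0 1 x * x ^ 2) := fun x => by
    simp only [Pi.mul_apply, gaussianPDF]
    rw [← ENNReal.ofReal_mul (gaussianPDFReal_nonneg _ _ _)]
  simp_rw [heq]
  have hint : Integrable (fun x : ℝ => gaussianPDFReal 0 1 x * x ^ 2) := by
    have h := (integrable_rpow_mul_exp_neg_mul_sq (b := (1:ℝ)/2) (by norm_num)
      (s := 2) (by norm_num)).const_mul ((Real.sqrt (2 * π))⁻¹)
    refine h.congr (Filter.Eventually.of_forall fun x => ?_)
    rw [gaussianPDFReal_def]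
    push_cast
    rw [Real.rpow_two]
    ring_nf
  exact ((hasFiniteIntegral_iff_ofReal
    (Filter.Eventually.of_forall fun x =>
      mul_nonneg (gaussianPDFReal_nonneg _ _ _) (sq_nonneg _))).mp hint.2).ne

lemma gauss_L_fin : ∫⁻ t in Ioi 0, gaussianReal 0 1 {x : ℝ | t < |x|} * ENNReal.ofReal t ≠ ⊤ := by
  intro h
  apply gauss_sq_fin
  rw [second_moment_eq, h, ENNReal.mul_top (by norm_num)]

lemma minLaw_L_fin (lam : ℕ) (hlam : lam ≠ 0) :
    ∫⁻ t in Ioi 0, minLaw lam {x : ℝ | t < |x|} * ENNReal.ofReal t ≠ ⊤ := by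
  have hb : ∀ t ∈ Ioi (0:ℝ), minLaw lam {x : ℝ | t < |x|} * ENNReal.ofReal t
      ≤ (lam + 1 : ℕ) * (gaussianReal 0 1 {x : ℝ | t < |x|} * ENNReal.ofReal t) := by
    intro t ht
    rw [mem_Ioi] at ht
    set a := (gaussianReal 0 1 (Ioi t)).toReal with hadef
    have ha0 : 0 ≤ a := ENNReal.toReal_nonneg
    have ha1 : a < 1/2 := (gauss_half t ht).1
    have key : minLaw lam {x : ℝ | t < |x|} ≤ (lam + 1 : ℕ) * gaussianReal 0 1 {x : ℝ | t < |x|} := by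
      rw [minLaw_abs_tail lam hlam t ht]
      have hsub : Ioi t ⊆ {x : ℝ | t < |x|} := fun x hx => by
        simp only [mem_setOf_eq, lt_abs]; left; exact hx
      calc ENNReal.ofReal ((1 - (1 - a) ^ lam) + a ^ lam)
          ≤ ENNReal.ofReal ((lam + 1 : ℕ) * a) := by
            apply ENNReal.ofReal_le_ofReal
            have hb1 : 1 - (1 - a) ^ lam ≤ lam * a := by
              have := one_add_mul_le_pow (a := -a) (by linarith) lam
              rw [← sub_eq_add_neg] at this
              have h2 : (lam : ℝ) * (-a) = -(lam * a) := by ring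
              rw [h2] at this
              linarith
            have hb2 : a ^ lam ≤ a := by
              obtain ⟨k, rfl⟩ := Nat.exists_eq_add_of_le (Nat.one_le_iff_ne_zero.mpr hlam)
              calc a ^ (1 + k) = a * a ^ k := by rw [pow_add, pow_one]
              _ ≤ a * 1 := by
                  apply mul_le_mul_of_nonneg_left _ ha0
                  exact pow_le_one₀ ha0 (by linarith)
              _ = a := mul_one a
            push_cast
            nlinarith
        _ = (lam + 1 : ℕ) * ENNReal.ofReal a := by
            rw [ENNReal.ofReal_mul (by positivity)]
            congr 1
            rw [ENNReal.ofReal_natCast]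
        _ = (lam + 1 : ℕ) * gaussianReal 0 1 (Ioi t) := by
            rw [hadef, ENNReal.ofReal_toReal (measure_ne_top _ _)]
        _ ≤ (lam + 1 : ℕ) * gaussianReal 0 1 {x : ℝ | t < |x|} := by
            exact mul_le_mul_right (measure_mono hsub) _
    calc minLaw lam {x : ℝ | t < |x|} * ENNReal.ofReal t
        ≤ ((lam + 1 : ℕ) * gaussianReal 0 1 {x : ℝ | t < |x|}) * ENNReal.ofReal t :=
          mul_le_mul_left key _
      _ = (lam + 1 : ℕ) * (gaussianReal 0 1 {x : ℝ | t < |x|} * ENNReal.ofReal t) := by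
          rw [mul_assoc]
  have hle := setLIntegral_mono (μ := volume)
    ((measurable_const.mul ((meas_tail (gaussianReal 0 1)).mul measurable_ofReal)) :
      Measurable fun t : ℝ => (lam + 1 : ℕ) * (gaussianReal 0 1 {x : ℝ | t < |x|} * ENNReal.ofReal t))
    hb
  refine ne_top_of_le_ne_top ?_ hle
  simp only [Pi.mul_apply]
  rw [lintegral_const_mul _ (f := fun t : ℝ => gaussianReal 0 1 {x : ℝ | t < |x|} * ENNReal.ofReal t)
    ((meas_tail (gaussianReal 0 1)).mul measurable_ofReal)]
  exact ENNReal.mul_ne_top (ENNReal.natCast_ne_top _) gauss_L_fin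

lemma key_lt (lam : ℕ) (hlam : 2 ≤ lam) {a : ℝ} (ha0 : 0 < a) (ha : a < 1/2) :
    (1 - (1 - a) ^ lam) + a ^ lam < (1 - (1 - a) ^ (lam + 1)) + a ^ (lam + 1) := by
  obtain ⟨k, rfl⟩ := Nat.exists_eq_add_of_le hlam
  have hb : (0:ℝ) < 1 - a := by linarith
  have h1a : a < 1 - a := by linarith
  have hpow : a ^ (k + 1) < (1 - a) ^ (k + 1) :=
    pow_lt_pow_left₀ h1a ha0.le (Nat.succ_ne_zero k)
  have hmul := mul_lt_mul_of_pos_right hpow (mul_pos ha0 hb)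
  have ea1 : a ^ (2 + k) = a ^ (k + 1) * a := by ring
  have ea2 : a ^ (2 + k + 1) = a ^ (k + 1) * (a * a) := by ring
  have eb1 : (1 - a) ^ (2 + k) = (1 - a) ^ (k + 1) * (1 - a) := by ring
  have eb2 : (1 - a) ^ (2 + k + 1) = (1 - a) ^ (k + 1) * ((1 - a) * (1 - a)) := by ring
  rw [ea1, ea2, eb1, eb2]
  nlinarith [hmul]

/-- For every `λ ≥ 2`, `E(N_{1:λ+1}²) > E(N_{1:λ}²)`: the second
moment of the minimum of `λ` i.i.d. standard normals is strictly increasing in `λ`. -/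
theorem stmt_2 (lam : ℕ) (hlam : 2 ≤ lam) :
    (∫ x, x ^ 2 ∂(minLaw lam)) < ∫ x, x ^ 2 ∂(minLaw (lam + 1)) := by
  have hne : lam ≠ 0 := by omega
  have hne' : lam + 1 ≠ 0 := by omega
  set L : ℕ → ℝ≥0∞ := fun k => ∫⁻ t in Ioi 0, minLaw k {x : ℝ | t < |x|} * ENNReal.ofReal t
    with hLdef
  have hrep : ∀ k : ℕ, ∫ x, x ^ 2 ∂(minLaw k) = (2 * L k).toReal := by
    intro k
    rw [integral_eq_lintegral_of_nonneg_ae (Filter.Eventually.of_forall fun x => sq_nonneg x)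
      ((measurable_id.pow_const 2).aestronglyMeasurable)]
    rw [second_moment_eq]
  have hlt : L lam < L (lam + 1) := by
    apply setLIntegral_strict_mono measurableSet_Ioi
    · simp [Real.volume_Ioi]
    · exact (meas_tail (minLaw (lam + 1))).mul measurable_ofReal
    · exact minLaw_L_fin lam hne
    · refine Filter.Eventually.of_forall fun t ht => ?_
      rw [mem_Ioi] at ht
      rw [minLaw_abs_tail lam hne t ht, minLaw_abs_tail (lam + 1) hne' t ht]
      obtain ⟨ha, ha0⟩ := gauss_half t ht
      set a := (gaussianReal 0 1 (Ioi t)).toReal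
      rw [ENNReal.mul_lt_mul_iff_left (by simp [ht, le_of_lt] : ENNReal.ofReal t ≠ 0)
        ENNReal.ofReal_ne_top]
      have hrhs : 0 < (1 - (1 - a) ^ (lam + 1)) + a ^ (lam + 1) := by
        have h1 : (1 - a) ^ (lam + 1) ≤ 1 := pow_le_one₀ (by linarith) (by linarith)
        have h2 : 0 < a ^ (lam + 1) := pow_pos ha0 _
        linarith
      rw [ENNReal.ofReal_lt_ofReal_iff hrhs]
      exact key_lt lam hlam ha0 ha
  rw [hrep lam, hrep (lam + 1)]
  have hfin1 : 2 * L lam ≠ ⊤ := ENNReal.mul_ne_top (by norm_num) (minLaw_L_fin lam hne)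
  have hfin2 : 2 * L (lam + 1) ≠ ⊤ := ENNReal.mul_ne_top (by norm_num) (minLaw_L_fin _ hne')
  rw [ENNReal.toReal_lt_toReal hfin1 hfin2]
  exact (ENNReal.mul_lt_mul_iff_right (by norm_num) (by norm_num)).mpr hlt
end

section
/- For every integer λ ≥ 3, E(N_{1:λ}²) > 1, where N_{1:λ} is the minimum of λ i.i.d. standard normal random variables. -/
open MeasureTheory ProbabilityTheory Filter Real

open Set in
theorem my_pdf01 (x : ℝ) : gaussianPDFReal 0 1 x = (√(2*π))⁻¹ * rexp (-(1/2 * x ^ 2)) := by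
  simp only [gaussianPDFReal, NNReal.coe_one, mul_one, sub_zero]
  rw [show -x ^ 2 / 2 = -(1/2 * x ^ 2) from by ring]

theorem my_gamma32 : Real.Gamma (3/2) = Real.sqrt π / 2 := by
  have : (3/2 : ℝ) = 1/2 + 1 := by norm_num
  rw [this, Real.Gamma_add_one (by norm_num), Real.Gamma_one_half_eq]
  ring

open Set in
theorem my_int_Ioi : ∫ x in Ioi (0:ℝ), x ^ 2 * rexp (-(1/2 * x ^ 2)) = Real.sqrt (2*π) / 2 := by
  have h := integral_rpow_mul_exp_neg_mul_rpow (p := 2) (q := 2) (b := 1/2)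
    (by norm_num) (by norm_num) (by norm_num)
  simp_rw [show ((2:ℝ)) = ((2:ℕ):ℝ) by norm_num, Real.rpow_natCast] at h
  norm_num at h
  rw [h, my_gamma32]
  rw [show ((1:ℝ)/2) = 2⁻¹ by norm_num, Real.inv_rpow (by norm_num), ← Real.rpow_neg (by norm_num),
    neg_neg]
  rw [show ((3:ℝ)/2) = 1 + 1/2 by norm_num, Real.rpow_add (by norm_num), Real.rpow_one,
    show (2:ℝ) ^ ((1:ℝ)/2) = √2 by rw [Real.sqrt_eq_rpow],
    Real.sqrt_mul (by norm_num)]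
  ring

theorem my_integrable_base : Integrable (fun x : ℝ => x ^ 2 * rexp (-(1/2 * x ^ 2))) volume := by
  have h := integrable_rpow_mul_exp_neg_mul_sq (by norm_num : (0:ℝ) < 1/2)
    (by norm_num : (-1:ℝ) < 2)
  simp_rw [show ((2:ℝ)) = ((2:ℕ):ℝ) by norm_num, Real.rpow_natCast, neg_mul] at h
  exact h

theorem my_smul_eq (x : ℝ) : (gaussianPDFReal 0 1 x).toNNReal • (x ^ 2)
    = (√(2*π))⁻¹ * (x ^ 2 * rexp (-(1/2 * x ^ 2))) := by
  rw [NNReal.smul_def, smul_eq_mul, Real.coe_toNNReal _ (gaussianPDFReal_nonneg 0 1 x), my_pdf01]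
  ring

theorem my_integrable_sq_gauss : Integrable (fun x : ℝ => x ^ 2) (gaussianReal 0 1) := by
  rw [gaussianReal_of_var_ne_zero 0 one_ne_zero]
  have hpdf : gaussianPDF 0 1 = fun x => ((gaussianPDFReal 0 1 x).toNNReal : ENNReal) := by
    funext x; rfl
  rw [hpdf, integrable_withDensity_iff_integrable_smul
    ((measurable_gaussianPDFReal 0 1).real_toNNReal)]
  simp_rw [my_smul_eq]
  exact my_integrable_base.const_mul _

open Set in
theorem my_moment : ∫ x, x ^ 2 ∂(gaussianReal 0 1) = 1 := by
  rw [gaussianReal_of_var_ne_zero 0 one_ne_zero]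
  have hpdf : gaussianPDF 0 1 = fun x => ((gaussianPDFReal 0 1 x).toNNReal : ENNReal) := by
    funext x; rfl
  rw [hpdf, integral_withDensity_eq_integral_smul
    ((measurable_gaussianPDFReal 0 1).real_toNNReal)]
  simp_rw [my_smul_eq]
  rw [integral_const_mul]
  have habs : ∫ x : ℝ, x ^ 2 * rexp (-(1/2 * x ^ 2))
      = 2 * ∫ x in Ioi (0:ℝ), x ^ 2 * rexp (-(1/2 * x ^ 2)) := by
    rw [← integral_comp_abs (f := fun x : ℝ => x ^ 2 * rexp (-(1/2 * x ^ 2)))]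
    simp_rw [sq_abs]
  rw [habs, my_int_Ioi]
  have h2π : (0:ℝ) < √(2*π) := Real.sqrt_pos.mpr (by positivity)
  field_simp

theorem my_measurable_min (lam : ℕ) : Measurable fun x : Fin lam → ℝ => ⨅ i, x i :=
  Measurable.iInf fun i => measurable_pi_apply i

open Set in
theorem my_lt_iInf {lam : ℕ} [Nonempty (Fin lam)] (x : Fin lam → ℝ) (s : ℝ) :
    s < (⨅ i, x i) ↔ ∀ i, s < x i := by
  constructor
  · intro h i
    exact lt_of_lt_of_le h (ciInf_le (Set.Finite.bddBelow (finite_range x)) i)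
  · intro h
    obtain ⟨i₀, hi₀⟩ := Finite.exists_min x
    have : (⨅ i, x i) = x i₀ :=
      le_antisymm (ciInf_le (Set.Finite.bddBelow (finite_range x)) i₀) (le_ciInf hi₀)
    rw [this]; exact h i₀

open Set in
theorem my_min_Ioi (lam : ℕ) [Nonempty (Fin lam)] (s : ℝ) :
    minLaw lam (Ioi s) = gaussianReal 0 1 (Ioi s) ^ lam := by
  unfold minLaw
  rw [Measure.map_apply (my_measurable_min lam) measurableSet_Ioi]
  have hset : ((fun x : Fin lam → ℝ => ⨅ i, x i) ⁻¹' Ioi s)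
      = Set.pi univ (fun _ => Ioi s) := by
    ext x
    simp only [mem_preimage, mem_Ioi, Set.mem_pi, mem_univ, forall_true_left]
    exact my_lt_iInf x s
  rw [hset, Measure.pi_pi]
  simp [Finset.prod_const]

open Set in
theorem my_min_Ici (lam : ℕ) [Nonempty (Fin lam)] (s : ℝ) :
    minLaw lam (Ici s) = gaussianReal 0 1 (Ici s) ^ lam := by
  unfold minLaw
  rw [Measure.map_apply (my_measurable_min lam) measurableSet_Ici]
  have hset : ((fun x : Fin lam → ℝ => ⨅ i, x i) ⁻¹' Ici s)
      = Set.pi univ (fun _ => Ici s) := by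
    ext x
    simp only [mem_preimage, mem_Ici, Set.mem_pi, mem_univ, forall_true_left]
    exact le_ciInf_iff (Set.Finite.bddBelow (finite_range x))
  rw [hset, Measure.pi_pi]
  simp [Finset.prod_const]

open Set in
theorem my_gauss_symm (s : ℝ) : gaussianReal 0 1 (Iio (-s)) = gaussianReal 0 1 (Ioi s) := by
  have hmap := gaussianReal_map_const_mul (μ := 0) (v := 1) (-1)
  have h1 : (⟨(-1:ℝ)^2, sq_nonneg _⟩ : NNReal) * 1 = 1 := by
    ext; norm_num
  replace hmap : Measure.map (fun x : ℝ => -1 * x) (gaussianReal 0 1) = gaussianReal 0 1 := by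
    rw [hmap]; congr 1
    · simp
  conv_lhs => rw [← hmap]
  rw [Measure.map_apply (measurable_const_mul _) measurableSet_Iio]
  congr 1
  ext x
  simp only [mem_preimage, mem_Iio, mem_Ioi]
  constructor <;> intro h <;> nlinarith

open Set in
theorem my_gauss_pos {S : Set ℝ} (hvol : volume S ≠ 0) :
    0 < gaussianReal 0 1 S := by
  rcases eq_or_ne (gaussianReal 0 1 S) 0 with h | h
  · exact absurd ((gaussianReal_absolutelyContinuous' 0 one_ne_zero) h) hvol
  · exact h.bot_lt

theorem my_gauss_singleton (c : ℝ) : gaussianReal 0 1 {c} = 0 :=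
  (gaussianReal_absolutelyContinuous 0 one_ne_zero) (Real.volume_singleton)

open Set in
theorem my_gauss_Ioi_zero : gaussianReal 0 1 (Ioi 0) = ENNReal.ofReal (1/2) := by
  have hsym : gaussianReal 0 1 (Iio 0) = gaussianReal 0 1 (Ioi 0) := by
    have := my_gauss_symm 0; rwa [neg_zero] at this
  have h1 : gaussianReal 0 1 (Iio 0) + gaussianReal 0 1 (Ici 0) = 1 := by
    rw [← measure_union (Iio_disjoint_Ici le_rfl) measurableSet_Ici, Iio_union_Ici,
      measure_univ]
  have h2 : gaussianReal 0 1 (Ici 0) = gaussianReal 0 1 (Ioi 0) := by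
    have : (Ici (0:ℝ)) = {0} ∪ Ioi 0 := by
      ext x; simp [le_iff_lt_or_eq, or_comm, eq_comm]
    rw [this, measure_union (by simp) measurableSet_Ioi, my_gauss_singleton, zero_add]
  rw [hsym, h2] at h1
  have hX : (2:ENNReal) * gaussianReal 0 1 (Ioi 0) = 1 := by rw [two_mul]; exact h1
  have : gaussianReal 0 1 (Ioi 0) = 1/2 := by
    rw [← hX, ENNReal.eq_div_iff (by norm_num) (by norm_num)]
  rw [this, ENNReal.ofReal_div_of_pos (by norm_num)]
  norm_num

open Set in
theorem my_q_pos (s : ℝ) : 0 < (gaussianReal 0 1 (Ioi s)).toReal :=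
  ENNReal.toReal_pos (my_gauss_pos (by simp [Real.volume_Ioi])).ne' (measure_ne_top _ _)

open Set in
theorem my_q_lt_half {s : ℝ} (hs : 0 < s) : (gaussianReal 0 1 (Ioi s)).toReal < 1/2 := by
  have hsplit : gaussianReal 0 1 (Ioc 0 s) + gaussianReal 0 1 (Ioi s)
      = gaussianReal 0 1 (Ioi 0) := by
    rw [← measure_union (Set.Ioc_disjoint_Ioi le_rfl) measurableSet_Ioi,
      Set.Ioc_union_Ioi_eq_Ioi hs.le]
  have hIoc : 0 < (gaussianReal 0 1 (Ioc 0 s)).toReal := by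
    refine ENNReal.toReal_pos (my_gauss_pos ?_).ne' (measure_ne_top _ _)
    simp [Real.volume_Ioc, hs]
  have := congrArg ENNReal.toReal hsplit
  rw [ENNReal.toReal_add (measure_ne_top _ _) (measure_ne_top _ _), my_gauss_Ioi_zero,
    ENNReal.toReal_ofReal (by norm_num)] at this
  linarith

open Set in
theorem my_sq_tail_set {t : ℝ} (ht : 0 < t) :
    {x : ℝ | t < x ^ 2} = Iio (-Real.sqrt t) ∪ Ioi (Real.sqrt t) := by
  ext x
  simp only [mem_setOf_eq, mem_union, mem_Iio, mem_Ioi]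
  rw [show t < x ^ 2 ↔ Real.sqrt t < |x| by
    rw [← Real.sqrt_lt_sqrt_iff ht.le, Real.sqrt_sq_eq_abs], lt_abs]
  constructor
  · rintro (h | h)
    · right; exact h
    · left; linarith
  · rintro (h | h)
    · right; linarith
    · left; exact h

open Set in
theorem my_disj (s : ℝ) (hs : 0 ≤ s) : Disjoint (Iio (-s)) (Ioi s) :=
  (Iio_disjoint_Ici le_rfl).mono_right (show Ioi s ⊆ Ici (-s) from fun x hx => le_trans (by linarith : -s ≤ s) (le_of_lt hx))

open Set in
theorem my_gauss_Ici (s : ℝ) :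
    gaussianReal 0 1 (Ici (-s)) = 1 - gaussianReal 0 1 (Ioi s) := by
  rw [← my_gauss_symm s, ← compl_Iio, measure_compl measurableSet_Iio (measure_ne_top _ _),
    measure_univ]

open Set in
theorem my_min_Iio (lam : ℕ) [Nonempty (Fin lam)] (s : ℝ) :
    minLaw lam (Iio (-s)) = 1 - (1 - gaussianReal 0 1 (Ioi s)) ^ lam := by
  rw [← compl_Ici, measure_compl measurableSet_Ici (measure_ne_top _ _), measure_univ,
    my_min_Ici, my_gauss_Ici]

open Set in
theorem my_gauss_tail {t : ℝ} (ht : 0 < t) :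
    (gaussianReal 0 1 {x | t < x ^ 2}).toReal
      = 2 * (gaussianReal 0 1 (Ioi (Real.sqrt t))).toReal := by
  rw [my_sq_tail_set ht, measure_union (my_disj _ (Real.sqrt_nonneg t)) measurableSet_Ioi,
    my_gauss_symm, ENNReal.toReal_add (measure_ne_top _ _) (measure_ne_top _ _)]
  ring

open Set in
theorem my_min_tail (lam : ℕ) [Nonempty (Fin lam)] {t : ℝ} (ht : 0 < t) :
    (minLaw lam {x | t < x ^ 2}).toReal
      = (1 - (1 - (gaussianReal 0 1 (Ioi (Real.sqrt t))).toReal) ^ lam)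
        + (gaussianReal 0 1 (Ioi (Real.sqrt t))).toReal ^ lam := by
  set Q := gaussianReal 0 1 (Ioi (Real.sqrt t)) with hQdef
  have hQ1 : Q ≤ 1 := prob_le_one
  have hQtop : Q ≠ ⊤ := measure_ne_top _ _
  have h1Q : (1 - Q).toReal = 1 - Q.toReal := by
    rw [ENNReal.toReal_sub_of_le hQ1 (by simp), ENNReal.toReal_one]
  rw [my_sq_tail_set ht, measure_union (my_disj _ (Real.sqrt_nonneg t)) measurableSet_Ioi,
    my_min_Iio, my_min_Ioi,
    ENNReal.toReal_add (ne_top_of_le_ne_top (by simp) (tsub_le_self)) (ENNReal.pow_ne_top hQtop)]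
  congr 1
  · rw [ENNReal.toReal_sub_of_le (pow_le_one' tsub_le_self lam) (by simp),
      ENNReal.toReal_one, ENNReal.toReal_pow, h1Q]
  · rw [ENNReal.toReal_pow]

theorem my_key_ineq (lam : ℕ) (hlam : 3 ≤ lam) {q : ℝ} (h0 : 0 < q) (h2 : q < 1/2) :
    2 * q < q ^ lam + (1 - (1 - q) ^ lam) := by
  induction lam, hlam using Nat.le_induction with
  | base =>
    nlinarith [mul_pos (mul_pos h0 (by linarith : (0:ℝ) < 1 - 2*q)) (by linarith : (0:ℝ) < 1 - q)]
  | succ n hn ih =>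
    have hle : q ^ (n-1) ≤ (1-q) ^ (n-1) := pow_le_pow_left₀ h0.le (by linarith) _
    have hn1 : n - 1 + 1 = n := by omega
    have e1 : q ^ n = q ^ (n-1) * q := by rw [← pow_succ, hn1]
    have e2 : (1-q) ^ n = (1-q) ^ (n-1) * (1-q) := by rw [← pow_succ, hn1]
    have e3 : q ^ (n+1) = q ^ (n-1) * q * q := by rw [← e1, pow_succ]
    have e4 : (1-q) ^ (n+1) = (1-q) ^ (n-1) * (1-q) * (1-q) := by rw [← e2, pow_succ]
    nlinarith [mul_le_mul_of_nonneg_left hle (mul_nonneg h0.le (by linarith : (0:ℝ) ≤ 1 - q)),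
      pow_nonneg h0.le (n-1)]

open Set in
theorem my_pi_map_eval (lam : ℕ) (i : Fin lam) :
    (Measure.pi fun _ : Fin lam => gaussianReal 0 1).map (fun x => x i)
      = gaussianReal 0 1 := by
  refine Measure.ext fun s hs => ?_
  rw [Measure.map_apply (measurable_pi_apply i) hs]
  have hset : ((fun x : Fin lam → ℝ => x i) ⁻¹' s)
      = Set.pi univ (Function.update (fun _ => univ) i s) := by
    ext x
    simp only [mem_preimage, Set.mem_pi, mem_univ, forall_true_left]
    constructor
    · intro h j
      rcases eq_or_ne j i with rfl | hj
      · simpa using h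
      · simp [Function.update_apply, hj]
    · intro h
      have := h i
      simpa using this
  rw [hset, Measure.pi_pi]
  rw [show (fun j => (gaussianReal 0 1) (Function.update (fun _ => univ) i s j))
      = Function.update (fun _ : Fin lam => (1 : ENNReal)) i (gaussianReal 0 1 s) by
    funext j
    rcases eq_or_ne j i with rfl | hj
    · simp
    · simp [Function.update_apply, hj]]
  rw [Finset.prod_update_of_mem (Finset.mem_univ i)]
  simp

open Set in
theorem my_integrable_min_sq (lam : ℕ) [Nonempty (Fin lam)] :
    Integrable (fun x : ℝ => x ^ 2) (minLaw lam) := by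
  have hmeas : Measurable fun x : ℝ => x ^ 2 := by fun_prop
  unfold minLaw
  rw [integrable_map_measure (g := fun x : ℝ => x ^ 2) hmeas.aestronglyMeasurable
    (my_measurable_min lam).aemeasurable]
  have hsum : Integrable (fun x : Fin lam → ℝ => ∑ i, (x i) ^ 2)
      (Measure.pi fun _ : Fin lam => gaussianReal 0 1) := by
    refine integrable_finset_sum _ (fun i _ => ?_)
    have h := my_integrable_sq_gauss
    rw [← my_pi_map_eval lam i] at h
    exact (integrable_map_measure (g := fun x : ℝ => x ^ 2) hmeas.aestronglyMeasurable
      (measurable_pi_apply i).aemeasurable).mp h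
  refine hsum.mono ?_ (ae_of_all _ fun x => ?_)
  · exact ((my_measurable_min lam).pow_const 2).aestronglyMeasurable
  · obtain ⟨i₀, hi₀⟩ := Finite.exists_min x
    have hmin : (fun x : Fin lam → ℝ => ⨅ i, x i) x = x i₀ :=
      le_antisymm (ciInf_le (Set.Finite.bddBelow (finite_range x)) i₀) (le_ciInf hi₀)
    have hle : ((⨅ i, x i)) ^ 2 ≤ ∑ i, (x i) ^ 2 := by
      calc ((⨅ i, x i)) ^ 2 = (x i₀) ^ 2 := by rw [show (⨅ i, x i) = x i₀ from hmin]
      _ ≤ ∑ i, (x i) ^ 2 :=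
        Finset.single_le_sum (f := fun i => (x i) ^ 2) (fun i _ => sq_nonneg _)
          (Finset.mem_univ i₀)
    have h2 : (0:ℝ) ≤ ∑ i, (x i) ^ 2 := Finset.sum_nonneg fun i _ => sq_nonneg _
    show ‖((fun x : ℝ => x ^ 2) ∘ fun x => ⨅ i, x i) x‖ ≤ ‖∑ i, (x i) ^ 2‖
    rw [Function.comp_apply, Real.norm_eq_abs, Real.norm_eq_abs,
      abs_of_nonneg (sq_nonneg _), abs_of_nonneg h2]
    exact hle

open Set in
/-- For every `λ ≥ 3`, `E(N_{1:λ}²) > 1`. -/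
theorem stmt_3 (lam : ℕ) (hlam : 3 ≤ lam) :
    1 < ∫ x, x ^ 2 ∂(minLaw lam) := by
  haveI : Nonempty (Fin lam) := ⟨⟨0, by omega⟩⟩
  have hnn_m : 0 ≤ᵐ[minLaw lam] fun x : ℝ => x ^ 2 := ae_of_all _ fun x => sq_nonneg x
  have hnn_g : 0 ≤ᵐ[gaussianReal 0 1] fun x : ℝ => x ^ 2 := ae_of_all _ fun x => sq_nonneg x
  have hmeas : Measurable fun x : ℝ => x ^ 2 := by fun_prop
  have hint_m := my_integrable_min_sq lam
  have hint_g := my_integrable_sq_gauss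
  -- layer cake
  have hA := lintegral_eq_lintegral_meas_lt (minLaw lam) hnn_m hmeas.aemeasurable
  have hB := lintegral_eq_lintegral_meas_lt (gaussianReal 0 1) hnn_g hmeas.aemeasurable
  set Tm : ℝ → ENNReal := fun t => minLaw lam {a : ℝ | t < a ^ 2} with hTm_def
  set Tg : ℝ → ENNReal := fun t => gaussianReal 0 1 {a : ℝ | t < a ^ 2} with hTg_def
  have hTm_meas : Measurable Tm :=
    Antitone.measurable (fun a b hab => measure_mono (fun x hx => lt_of_le_of_lt hab hx))
  have hTg_meas : Measurable Tg :=
    Antitone.measurable (fun a b hab => measure_mono (fun x hx => lt_of_le_of_lt hab hx))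
  set D : ℝ → ENNReal := fun t => Tm t - Tg t with hD_def
  have hD_meas : Measurable D := hTm_meas.sub hTg_meas
  -- pointwise strict inequality on Ioi 0
  have hstrict : ∀ t ∈ Ioi (0:ℝ), Tg t < Tm t := by
    intro t ht
    have ht' : (0:ℝ) < t := ht
    have hs : (0:ℝ) < Real.sqrt t := Real.sqrt_pos.mpr ht'
    have hq0 := my_q_pos (Real.sqrt t)
    have hq2 := my_q_lt_half hs
    have hkey := my_key_ineq lam hlam hq0 hq2
    have hlt : (Tg t).toReal < (Tm t).toReal := by
      rw [hTg_def, hTm_def]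
      simp only
      rw [my_gauss_tail ht', my_min_tail lam ht']
      linarith
    exact (ENNReal.toReal_lt_toReal (measure_ne_top _ _) (measure_ne_top _ _)).mp hlt
  -- decomposition Tm = Tg + D on Ioi 0
  have hsplit : ∀ t ∈ Ioi (0:ℝ), Tm t = Tg t + D t := by
    intro t ht
    exact (add_tsub_cancel_of_le (hstrict t ht).le).symm
  have hAeq : ∫⁻ t in Ioi (0:ℝ), Tm t = (∫⁻ t in Ioi (0:ℝ), Tg t) + ∫⁻ t in Ioi (0:ℝ), D t := by
    rw [← lintegral_add_left hTg_meas]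
    exact setLIntegral_congr_fun measurableSet_Ioi hsplit
  have hBfin : (∫⁻ t in Ioi (0:ℝ), Tg t) ≠ ⊤ := by
    rw [← hB]; exact hint_g.lintegral_lt_top.ne
  have hAfin : (∫⁻ t in Ioi (0:ℝ), Tm t) ≠ ⊤ := by
    rw [← hA]; exact hint_m.lintegral_lt_top.ne
  have hDpos : 0 < ∫⁻ t in Ioi (0:ℝ), D t := by
    rw [lintegral_pos_iff_support hD_meas]
    have hsub : Ioi (0:ℝ) ⊆ Function.support D := by
      intro t ht
      simp only [Function.mem_support, hD_def]
      exact (tsub_pos_of_lt (hstrict t ht)).ne'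
    calc (0:ENNReal) < volume (Ioi (0:ℝ)) := by simp [Real.volume_Ioi]
    _ = (volume.restrict (Ioi (0:ℝ))) (Ioi (0:ℝ)) := (Measure.restrict_apply_self _ _).symm
    _ ≤ (volume.restrict (Ioi (0:ℝ))) (Function.support D) := measure_mono hsub
  have hlt : (∫⁻ t in Ioi (0:ℝ), Tg t) < ∫⁻ t in Ioi (0:ℝ), Tm t := by
    rw [hAeq]
    exact ENNReal.lt_add_right hBfin hDpos.ne'
  -- convert to Bochner integrals
  have hm_int : ∫ x, x ^ 2 ∂(minLaw lam) = (∫⁻ t in Ioi (0:ℝ), Tm t).toReal := by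
    rw [integral_eq_lintegral_of_nonneg_ae hnn_m hmeas.aestronglyMeasurable, hA]
  have hg_int : ∫ x, x ^ 2 ∂(gaussianReal 0 1) = (∫⁻ t in Ioi (0:ℝ), Tg t).toReal := by
    rw [integral_eq_lintegral_of_nonneg_ae hnn_g hmeas.aestronglyMeasurable, hB]
  have : (1:ℝ) = (∫⁻ t in Ioi (0:ℝ), Tg t).toReal := by rw [← hg_int, my_moment]
  rw [hm_int, this]
  exact (ENNReal.toReal_lt_toReal hBfin hAfin).mpr hlt
end

section
/- Let λ ≥ 2 and 0 < c < 1, or λ ≥ 3 and 0 < c ≤ 1. Then 2(1−c) E(N_{1:λ})² + c (E(N_{1:λ}²) − 1) > 0, where N_{1:λ} is the minimum of λ i.i.d. standard normal random variables. Consequently the divergence rate (1/(2 d_σ n)) (2(1−c) E(N_{1:λ})² + c (E(N_{1:λ}²) − 1)) of the step-size of the (1,λ)-CSA-ES is strictly positive for any d_σ > 0 and n ≥ 1. -/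
open MeasureTheory ProbabilityTheory Filter Real

namespace S15

open Set
open scoped ENNReal NNReal

noncomputable def phi (x : ℝ) : ℝ := gaussianPDFReal 0 1 x

lemma phi_def : phi = fun x => (Real.sqrt (2 * π))⁻¹ * Real.exp (-x ^ 2 / 2) := by
  ext x
  simp [phi, gaussianPDFReal]

lemma phi_pos (x : ℝ) : 0 < phi x := gaussianPDFReal_pos 0 1 x one_ne_zero

lemma phi_nonneg (x : ℝ) : 0 ≤ phi x := (phi_pos x).le

lemma continuous_phi : Continuous phi := by
  rw [phi_def]
  continuity

lemma phi_even (x : ℝ) : phi (-x) = phi x := by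
  rw [phi_def]; simp

lemma phi_le (x : ℝ) : phi x ≤ (Real.sqrt (2 * π))⁻¹ := by
  rw [phi_def]
  have h1 : Real.exp (-x ^ 2 / 2) ≤ 1 := by
    rw [Real.exp_le_one_iff]
    nlinarith [sq_nonneg x]
  have h2 : (0:ℝ) < (Real.sqrt (2 * π))⁻¹ := by positivity
  nlinarith

lemma hasDerivAt_phi (x : ℝ) : HasDerivAt phi (-x * phi x) x := by
  have h : HasDerivAt (fun x : ℝ => (Real.sqrt (2 * π))⁻¹ * Real.exp (-x ^ 2 / 2))
      ((Real.sqrt (2 * π))⁻¹ * (Real.exp (-x ^ 2 / 2) * (-x))) x := by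
    have h1 : HasDerivAt (fun x : ℝ => -x ^ 2 / 2) (-x) x := by
      have := ((hasDerivAt_pow 2 x).neg).div_const 2
      refine this.congr_deriv ?_
      push_cast
      ring
    exact (h1.exp).const_mul _
  rw [phi_def]
  convert h using 1
  simp [phi_def]
  ring

lemma integrable_phi : Integrable phi := by
  exact integrable_gaussianPDFReal 0 1

lemma integral_phi : ∫ x, phi x = 1 := by
  simpa [phi] using integral_gaussianPDFReal_eq_one 0 one_ne_zero

lemma tendsto_phi_atTop : Tendsto phi atTop (nhds 0) := by
  rw [phi_def]
  rw [show (0:ℝ) = (Real.sqrt (2 * π))⁻¹ * 0 by ring]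
  apply Tendsto.const_mul
  apply Real.tendsto_exp_atBot.comp
  apply Filter.Tendsto.atBot_div_const (by norm_num)
  apply tendsto_neg_atBot_iff.mpr
  exact tendsto_pow_atTop (by norm_num)

lemma tendsto_phi_atBot : Tendsto phi atBot (nhds 0) := by
  have := tendsto_phi_atTop.comp tendsto_neg_atBot_atTop
  convert this using 1
  ext x
  simp [Function.comp, phi_even]

lemma abs_le_exp (x : ℝ) : |x| ≤ 4 * Real.exp (x ^ 2 / 4) := by
  have h1 := Real.add_one_le_exp (x ^ 2 / 4)
  have h2 : |x| ≤ 1 + x ^ 2 := by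
    nlinarith [abs_nonneg x, sq_abs x, sq_nonneg (|x| - 1)]
  nlinarith [Real.exp_pos (x ^ 2 / 4)]

lemma sq_le_exp (x : ℝ) : x ^ 2 ≤ 4 * Real.exp (x ^ 2 / 4) := by
  have h1 := Real.add_one_le_exp (x ^ 2 / 4)
  nlinarith

lemma exp_quarter_bound (x : ℝ) (c : ℝ) (h : c ≤ 4 * Real.exp (x ^ 2 / 4)) (hc : 0 ≤ c) :
    c * phi x ≤ 4 * (Real.sqrt (2 * π))⁻¹ * Real.exp (-(4⁻¹ : ℝ) * x ^ 2) := by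
  rw [phi_def]
  have key : Real.exp (x ^ 2 / 4) * Real.exp (-x ^ 2 / 2) = Real.exp (-(4⁻¹ : ℝ) * x ^ 2) := by
    rw [← Real.exp_add]; ring_nf
  have hs : (0:ℝ) < (Real.sqrt (2 * π))⁻¹ := by positivity
  have he : (0:ℝ) < Real.exp (-x ^ 2 / 2) := Real.exp_pos _
  calc c * ((Real.sqrt (2 * π))⁻¹ * Real.exp (-x ^ 2 / 2))
      ≤ (4 * Real.exp (x ^ 2 / 4)) * ((Real.sqrt (2 * π))⁻¹ * Real.exp (-x ^ 2 / 2)) := by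
        apply mul_le_mul_of_nonneg_right h (by positivity)
    _ = 4 * (Real.sqrt (2 * π))⁻¹ * (Real.exp (x ^ 2 / 4) * Real.exp (-x ^ 2 / 2)) := by ring
    _ = 4 * (Real.sqrt (2 * π))⁻¹ * Real.exp (-(4⁻¹ : ℝ) * x ^ 2) := by rw [key]

lemma integrable_dom : Integrable (fun x : ℝ =>
    4 * (Real.sqrt (2 * π))⁻¹ * Real.exp (-(4⁻¹ : ℝ) * x ^ 2)) := by
  have := (integrable_exp_neg_mul_sq (b := (4:ℝ)⁻¹) (by norm_num)).const_mul
    (4 * (Real.sqrt (2 * π))⁻¹)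
  simpa using this

lemma integrable_abs_mul_phi : Integrable (fun x => |x| * phi x) := by
  apply integrable_dom.mono' (continuous_abs.mul continuous_phi).aestronglyMeasurable
  refine ae_of_all _ fun x => ?_
  simp only [Real.norm_eq_abs, Pi.mul_apply]
  rw [abs_of_nonneg (mul_nonneg (abs_nonneg x) (phi_nonneg x))]
  exact exp_quarter_bound x _ (abs_le_exp x) (abs_nonneg x)

lemma integrable_mul_phi : Integrable (fun x => x * phi x) := by
  apply integrable_abs_mul_phi.mono' (continuous_id.mul continuous_phi).aestronglyMeasurable
  refine ae_of_all _ fun x => ?_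
  simp only [Real.norm_eq_abs, Pi.mul_apply, id_eq]
  rw [abs_mul, abs_of_nonneg (phi_nonneg x)]

lemma integrable_sq_mul_phi : Integrable (fun x => x ^ 2 * phi x) := by
  apply integrable_dom.mono' ((continuous_pow 2).mul continuous_phi).aestronglyMeasurable
  refine ae_of_all _ fun x => ?_
  simp only [Real.norm_eq_abs, Pi.mul_apply]
  rw [abs_of_nonneg (mul_nonneg (sq_nonneg x) (phi_nonneg x))]
  exact exp_quarter_bound x _ (sq_le_exp x) (sq_nonneg x)

noncomputable def Q (x : ℝ) : ℝ := ∫ y in Set.Ioi x, phi y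

lemma Q_nonneg (x : ℝ) : 0 ≤ Q x :=
  setIntegral_nonneg measurableSet_Ioi fun y _ => phi_nonneg y

lemma Q_le_one (x : ℝ) : Q x ≤ 1 := by
  rw [← integral_phi]
  exact setIntegral_le_integral integrable_phi (ae_of_all _ fun y => phi_nonneg y)

lemma Q_pos (x : ℝ) : 0 < Q x := by
  rw [Q, setIntegral_pos_iff_support_of_nonneg_ae
    (ae_of_all _ fun y => phi_nonneg y) integrable_phi.integrableOn]
  have : Function.support phi = Set.univ := by
    ext y; simp [Function.support, (phi_pos y).ne']
  rw [this, Set.univ_inter]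
  simp

lemma Q_eq_sub (x : ℝ) : Q x = 1 - ∫ y in Set.Iic x, phi y := by
  have h : (∫ y in Set.Iic x, phi y) + (∫ y in Set.Ioi x, phi y) = ∫ y, phi y := by
    rw [← setIntegral_union (Set.Iic_disjoint_Ioi le_rfl) measurableSet_Ioi
      integrable_phi.integrableOn integrable_phi.integrableOn, Set.Iic_union_Ioi,
      setIntegral_univ]
  rw [integral_phi] at h
  rw [Q]; linarith

lemma hasDerivAt_Q (x : ℝ) : HasDerivAt Q (-phi x) x := by
  have hQ : Q = fun u => 1 - ((∫ y in Set.Iic (0:ℝ), phi y) + ∫ y in (0:ℝ)..u, phi y) := by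
    funext u
    rw [Q_eq_sub, ← intervalIntegral.integral_Iic_sub_Iic integrable_phi.integrableOn
      integrable_phi.integrableOn]
    ring
  rw [hQ]
  have h : HasStrictDerivAt (fun u => ∫ y in (0:ℝ)..u, phi y) (phi x) x :=
    intervalIntegral.integral_hasStrictDerivAt_right
      integrable_phi.intervalIntegrable
      (continuous_phi.stronglyMeasurable.stronglyMeasurableAtFilter)
      continuous_phi.continuousAt
  have := (h.hasDerivAt.const_add (∫ y in Set.Iic (0:ℝ), phi y)).const_sub 1
  simpa using this

lemma Q_strictAnti : StrictAnti Q := by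
  intro a b hab
  have h : Q a - Q b = ∫ y in a..b, phi y := by
    rw [Q_eq_sub, Q_eq_sub, ← intervalIntegral.integral_Iic_sub_Iic
      integrable_phi.integrableOn integrable_phi.integrableOn]
    ring
  have hpos : 0 < ∫ y in a..b, phi y :=
    intervalIntegral.intervalIntegral_pos_of_pos
      integrable_phi.intervalIntegrable phi_pos hab
  linarith

lemma Q_neg_eq (x : ℝ) : Q (-x) = 1 - Q x := by
  have h1 : (∫ y in Set.Ioi (-x), phi (-y)) = ∫ y in Set.Iic x, phi y := by
    simpa using integral_comp_neg_Ioi (c := -x) (f := phi)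
  have h2 : Q (-x) = ∫ y in Set.Ioi (-x), phi (-y) := by
    rw [Q]
    exact (setIntegral_congr_fun measurableSet_Ioi fun y _ => (phi_even y).symm)
  rw [h2, h1, Q_eq_sub]; ring

lemma integral_Ioi_mul_phi (x : ℝ) : ∫ y in Set.Ioi x, y * phi y = phi x := by
  have h := integral_Ioi_of_hasDerivAt_of_tendsto' (f := fun y => -phi y)
    (f' := fun y => y * phi y) (a := x)
    (fun y _ => by exact (hasDerivAt_phi y).neg.congr_deriv (by ring))
    integrable_mul_phi.integrableOn
    (by simpa using tendsto_phi_atTop.neg)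
  simpa using h

lemma tendsto_Q_atTop : Tendsto Q atTop (nhds 0) := by
  apply squeeze_zero' (Eventually.of_forall fun x => Q_nonneg x) _ tendsto_phi_atTop
  filter_upwards [eventually_ge_atTop (1:ℝ)] with x hx
  calc Q x = ∫ y in Set.Ioi x, phi y := rfl
    _ ≤ ∫ y in Set.Ioi x, y * phi y := by
        apply setIntegral_mono_on integrable_phi.integrableOn
          integrable_mul_phi.integrableOn measurableSet_Ioi
        intro y hy
        have h1 : (1:ℝ) ≤ y := le_trans hx (le_of_lt hy)
        nlinarith [phi_pos y]
    _ = phi x := integral_Ioi_mul_phi x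

lemma tendsto_Q_atBot : Tendsto Q atBot (nhds 1) := by
  have h : Tendsto (fun x => Q (-x)) atBot (nhds 0) :=
    tendsto_Q_atTop.comp tendsto_neg_atBot_atTop
  have h2 : Tendsto (fun x => 1 - Q (-x)) atBot (nhds 1) := by
    simpa using (tendsto_const_nhds (x := (1:ℝ))).sub h
  refine h2.congr fun x => ?_
  rw [Q_neg_eq]; ring


noncomputable def dens (lam : ℕ) (x : ℝ) : ℝ := lam * phi x * Q x ^ (lam - 1)

lemma dens_nonneg (lam : ℕ) (x : ℝ) : 0 ≤ dens lam x :=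
  mul_nonneg (mul_nonneg (Nat.cast_nonneg lam) (phi_nonneg x)) (pow_nonneg (Q_nonneg x) _)

lemma continuous_Q : Continuous Q := by
  have : Differentiable ℝ Q := fun x => (hasDerivAt_Q x).differentiableAt
  exact this.continuous

lemma continuous_dens (lam : ℕ) : Continuous (dens lam) :=
  (continuous_const.mul continuous_phi).mul (continuous_Q.pow _)

lemma Qpow_le_one (n : ℕ) (x : ℝ) : Q x ^ n ≤ 1 :=
  pow_le_one₀ (Q_nonneg x) (Q_le_one x)

lemma dens_le (lam : ℕ) (x : ℝ) : dens lam x ≤ lam * phi x := by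
  have h := Qpow_le_one (lam - 1) x
  have := phi_nonneg x
  have hl : (0:ℝ) ≤ lam := Nat.cast_nonneg lam
  calc dens lam x = lam * phi x * Q x ^ (lam - 1) := rfl
    _ ≤ lam * phi x * 1 := by
        apply mul_le_mul_of_nonneg_left h (by positivity)
    _ = lam * phi x := by ring

lemma integrable_dens (lam : ℕ) : Integrable (dens lam) := by
  apply (integrable_phi.const_mul (lam:ℝ)).mono' (continuous_dens lam).aestronglyMeasurable
  refine ae_of_all _ fun x => ?_
  rw [Real.norm_eq_abs, abs_of_nonneg (dens_nonneg lam x)]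
  exact dens_le lam x

lemma integrable_mul_dens (lam : ℕ) : Integrable (fun x => x * dens lam x) := by
  apply (integrable_abs_mul_phi.const_mul (lam:ℝ)).mono'
    (continuous_id.mul (continuous_dens lam)).aestronglyMeasurable
  refine ae_of_all _ fun x => ?_
  simp only [Real.norm_eq_abs, Pi.mul_apply, id_eq]
  rw [abs_mul, abs_of_nonneg (dens_nonneg lam x)]
  calc |x| * dens lam x ≤ |x| * (lam * phi x) :=
        mul_le_mul_of_nonneg_left (dens_le lam x) (abs_nonneg x)
    _ = lam * (|x| * phi x) := by ring

lemma integrable_sq_mul_dens (lam : ℕ) : Integrable (fun x => x ^ 2 * dens lam x) := by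
  apply (integrable_sq_mul_phi.const_mul (lam:ℝ)).mono'
    ((continuous_pow 2).mul (continuous_dens lam)).aestronglyMeasurable
  refine ae_of_all _ fun x => ?_
  simp only [Real.norm_eq_abs, Pi.mul_apply]
  rw [abs_of_nonneg (mul_nonneg (sq_nonneg x) (dens_nonneg lam x))]
  calc x ^ 2 * dens lam x ≤ x ^ 2 * (lam * phi x) :=
        mul_le_mul_of_nonneg_left (dens_le lam x) (sq_nonneg x)
    _ = lam * (x ^ 2 * phi x) := by ring

lemma integrable_phisq_pow (e : ℕ) : Integrable (fun x => phi x ^ 2 * Q x ^ e) := by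
  apply (integrable_phi.const_mul ((Real.sqrt (2 * π))⁻¹)).mono'
    ((continuous_phi.pow 2).mul (continuous_Q.pow e)).aestronglyMeasurable
  refine ae_of_all _ fun x => ?_
  simp only [Real.norm_eq_abs, Pi.mul_apply, Pi.pow_apply]
  rw [abs_of_nonneg (mul_nonneg (sq_nonneg _) (pow_nonneg (Q_nonneg x) e))]
  calc phi x ^ 2 * Q x ^ e ≤ phi x ^ 2 * 1 :=
        mul_le_mul_of_nonneg_left (Qpow_le_one e x) (sq_nonneg _)
    _ = phi x * phi x := by ring
    _ ≤ (Real.sqrt (2 * π))⁻¹ * phi x :=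
        mul_le_mul_of_nonneg_right (phi_le x) (phi_nonneg x)

lemma integrable_mul_phisq_pow (e : ℕ) : Integrable (fun x => x * phi x ^ 2 * Q x ^ e) := by
  apply (integrable_abs_mul_phi.const_mul ((Real.sqrt (2 * π))⁻¹)).mono'
    ((continuous_id.mul (continuous_phi.pow 2)).mul (continuous_Q.pow e)).aestronglyMeasurable
  refine ae_of_all _ fun x => ?_
  have hb : |x * phi x ^ 2 * Q x ^ e| = |x| * phi x ^ 2 * Q x ^ e := by
    rw [abs_mul, abs_mul, abs_of_nonneg (sq_nonneg (phi x)),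
      abs_of_nonneg (pow_nonneg (Q_nonneg x) e)]
  simp only [Real.norm_eq_abs, Pi.mul_apply, Pi.pow_apply, id_eq]
  rw [hb]
  calc |x| * phi x ^ 2 * Q x ^ e ≤ |x| * phi x ^ 2 * 1 :=
        mul_le_mul_of_nonneg_left (Qpow_le_one e x)
          (mul_nonneg (abs_nonneg x) (sq_nonneg _))
    _ = (|x| * phi x) * phi x := by ring
    _ ≤ (|x| * phi x) * (Real.sqrt (2 * π))⁻¹ :=
        mul_le_mul_of_nonneg_left (phi_le x)
          (mul_nonneg (abs_nonneg x) (phi_nonneg x))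
    _ = (Real.sqrt (2 * π))⁻¹ * (|x| * phi x) := by ring

lemma hasDerivAt_dens {lam : ℕ} (hlam : 1 ≤ lam) (x : ℝ) :
    HasDerivAt (dens lam)
      (-(x * dens lam x) - lam * (lam - 1 : ℕ) * phi x ^ 2 * Q x ^ (lam - 1 - 1)) x := by
  have h : HasDerivAt (fun y => (lam : ℝ) * phi y * Q y ^ (lam - 1))
      ((lam : ℝ) * (-x * phi x) * Q x ^ (lam - 1) +
        (lam : ℝ) * phi x * ((lam - 1 : ℕ) * Q x ^ (lam - 1 - 1) * (-phi x))) x := by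
    exact (((hasDerivAt_phi x).const_mul (lam:ℝ)).mul ((hasDerivAt_Q x).pow (lam - 1)))
  refine h.congr_deriv ?_
  simp only [dens]
  ring

lemma tendsto_dens_atTop (lam : ℕ) : Tendsto (dens lam) atTop (nhds 0) := by
  apply squeeze_zero (fun x => dens_nonneg lam x) (fun x => dens_le lam x)
  simpa using tendsto_phi_atTop.const_mul (lam:ℝ)

lemma tendsto_dens_atBot (lam : ℕ) : Tendsto (dens lam) atBot (nhds 0) := by
  apply squeeze_zero' (Eventually.of_forall fun x => dens_nonneg lam x)
    (Eventually.of_forall fun x => dens_le lam x)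
  simpa using tendsto_phi_atBot.const_mul (lam:ℝ)

noncomputable def psi (x : ℝ) : ℝ := 4 * (Real.sqrt (2 * π))⁻¹ * Real.exp (-(4⁻¹:ℝ) * x ^ 2)

lemma tendsto_psi_atTop : Tendsto psi atTop (nhds 0) := by
  rw [show (0:ℝ) = 4 * (Real.sqrt (2 * π))⁻¹ * 0 by ring]
  apply Tendsto.const_mul
  apply Real.tendsto_exp_atBot.comp
  exact (tendsto_pow_atTop (two_ne_zero)).const_mul_atTop_of_neg (by norm_num)

lemma tendsto_psi_atBot : Tendsto psi atBot (nhds 0) := by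
  have := tendsto_psi_atTop.comp tendsto_neg_atBot_atTop
  refine Tendsto.congr ?_ this
  intro x; simp [psi, Function.comp]

lemma abs_mul_dens_le_psi (lam : ℕ) (x : ℝ) : |x| * dens lam x ≤ (lam : ℝ) * psi x := by
  calc |x| * dens lam x ≤ |x| * (lam * phi x) :=
        mul_le_mul_of_nonneg_left (dens_le lam x) (abs_nonneg x)
    _ = (lam : ℝ) * (|x| * phi x) := by ring
    _ ≤ (lam : ℝ) * psi x := by
        apply mul_le_mul_of_nonneg_left _ (Nat.cast_nonneg lam)
        exact exp_quarter_bound x _ (abs_le_exp x) (abs_nonneg x)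

lemma tendsto_mul_dens_atTop (lam : ℕ) :
    Tendsto (fun x => -x * dens lam x) atTop (nhds 0) := by
  apply tendsto_of_tendsto_of_tendsto_of_le_of_le
    (g := fun x => -((lam:ℝ) * psi x)) (h := fun x => (lam:ℝ) * psi x)
  · simpa using (tendsto_psi_atTop.const_mul (lam:ℝ)).neg
  · simpa using tendsto_psi_atTop.const_mul (lam:ℝ)
  · intro x
    have h := abs_mul_dens_le_psi lam x
    have h2 : |(-x) * dens lam x| = |x| * dens lam x := by
      rw [abs_mul, abs_neg, abs_of_nonneg (dens_nonneg lam x)]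
    have := abs_le.mp (h2 ▸ h : |(-x) * dens lam x| ≤ (lam:ℝ) * psi x)
    exact this.1
  · intro x
    have h := abs_mul_dens_le_psi lam x
    have h2 : |(-x) * dens lam x| = |x| * dens lam x := by
      rw [abs_mul, abs_neg, abs_of_nonneg (dens_nonneg lam x)]
    have := abs_le.mp (h2 ▸ h : |(-x) * dens lam x| ≤ (lam:ℝ) * psi x)
    exact this.2

lemma tendsto_mul_dens_atBot (lam : ℕ) :
    Tendsto (fun x => -x * dens lam x) atBot (nhds 0) := by
  apply tendsto_of_tendsto_of_tendsto_of_le_of_le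
    (g := fun x => -((lam:ℝ) * psi x)) (h := fun x => (lam:ℝ) * psi x)
  · simpa using (tendsto_psi_atBot.const_mul (lam:ℝ)).neg
  · simpa using tendsto_psi_atBot.const_mul (lam:ℝ)
  · intro x
    have h := abs_mul_dens_le_psi lam x
    have h2 : |(-x) * dens lam x| = |x| * dens lam x := by
      rw [abs_mul, abs_neg, abs_of_nonneg (dens_nonneg lam x)]
    exact (abs_le.mp (h2 ▸ h : |(-x) * dens lam x| ≤ (lam:ℝ) * psi x)).1
  · intro x
    have h := abs_mul_dens_le_psi lam x
    have h2 : |(-x) * dens lam x| = |x| * dens lam x := by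
      rw [abs_mul, abs_neg, abs_of_nonneg (dens_nonneg lam x)]
    exact (abs_le.mp (h2 ▸ h : |(-x) * dens lam x| ≤ (lam:ℝ) * psi x)).2



lemma hasDerivAt_negQpow {lam : ℕ} (hlam : 1 ≤ lam) (x : ℝ) :
    HasDerivAt (fun y => -(Q y ^ lam)) (dens lam x) x := by
  have h := ((hasDerivAt_Q x).pow lam).neg
  refine h.congr_deriv ?_
  have hc : ((lam : ℕ) : ℝ) = ((lam:ℕ) : ℝ) := rfl
  simp only [dens]
  ring

lemma tendsto_negQpow_atBot (lam : ℕ) :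
    Tendsto (fun y => -(Q y ^ lam)) atBot (nhds (-1)) := by
  have := (tendsto_Q_atBot.pow lam).neg
  simpa using this

lemma tendsto_negQpow_atTop {lam : ℕ} (hlam : 1 ≤ lam) :
    Tendsto (fun y => -(Q y ^ lam)) atTop (nhds 0) := by
  have := (tendsto_Q_atTop.pow lam).neg
  simpa [zero_pow (by omega : lam ≠ 0)] using this

lemma integral_Iic_dens {lam : ℕ} (hlam : 1 ≤ lam) (t : ℝ) :
    ∫ x in Set.Iic t, dens lam x = 1 - Q t ^ lam := by
  have h := integral_Iic_of_hasDerivAt_of_tendsto' (a := t)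
    (fun x _ => hasDerivAt_negQpow hlam x)
    (integrable_dens lam).integrableOn (tendsto_negQpow_atBot lam)
  rw [h]; ring

lemma integral_dens {lam : ℕ} (hlam : 1 ≤ lam) : ∫ x, dens lam x = 1 := by
  have h := integral_of_hasDerivAt_of_tendsto
    (fun x => hasDerivAt_negQpow hlam x) (integrable_dens lam)
    (tendsto_negQpow_atBot lam) (tendsto_negQpow_atTop hlam)
  rw [h]; ring

lemma measurable_min (lam : ℕ) : Measurable fun x : Fin lam → ℝ => ⨅ i, x i :=
  Measurable.iInf fun i => measurable_pi_apply i

lemma minLaw_eq {lam : ℕ} (hlam : 1 ≤ lam) :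
    minLaw lam = volume.withDensity (fun x => ENNReal.ofReal (dens lam x)) := by
  have hne : Nonempty (Fin lam) := Fin.pos_iff_nonempty.mp (by omega)
  refine Measure.ext_of_Iic _ _ (fun t => ?_)
  have hpre : ((fun x : Fin lam → ℝ => ⨅ i, x i) ⁻¹' Set.Iic t) =
      (Set.pi Set.univ (fun _ : Fin lam => Set.Ioi t))ᶜ := by
    ext x
    simp only [Set.mem_preimage, Set.mem_Iic, Set.mem_compl_iff, Set.mem_pi, Set.mem_univ,
      Set.mem_Ioi, forall_const, not_forall, not_lt]
    obtain ⟨j, hj⟩ := Finite.exists_min x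
    have hinf : ⨅ i, x i = x j :=
      le_antisymm (ciInf_le (Finite.bddBelow_range x) j) (le_ciInf hj)
    rw [hinf]
    constructor
    · intro hx; exact ⟨j, hx⟩
    · rintro ⟨i, hi⟩; exact le_trans (hj i) hi
  have hbox : (Measure.pi fun _ : Fin lam => gaussianReal 0 1)
      (Set.pi Set.univ (fun _ : Fin lam => Set.Ioi t)) = ENNReal.ofReal (Q t) ^ lam := by
    rw [Measure.pi_pi]
    have hg : gaussianReal 0 1 (Set.Ioi t) = ENNReal.ofReal (Q t) := by
      rw [gaussianReal_apply_eq_integral 0 one_ne_zero]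
      rfl
    simp [hg]
  have hQt : (0:ℝ) ≤ Q t ^ lam := pow_nonneg (Q_nonneg t) lam
  have lhs : minLaw lam (Set.Iic t) = ENNReal.ofReal (1 - Q t ^ lam) := by
    rw [minLaw, Measure.map_apply (measurable_min lam) measurableSet_Iic, hpre,
      prob_compl_eq_one_sub (MeasurableSet.univ_pi fun _ => measurableSet_Ioi), hbox,
      ← ENNReal.ofReal_pow (Q_nonneg t), ← ENNReal.ofReal_one,
      ← ENNReal.ofReal_sub _ hQt]
  rw [lhs, withDensity_apply _ measurableSet_Iic,
    ← ofReal_integral_eq_lintegral_ofReal (integrable_dens lam).integrableOn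
      (ae_of_all _ fun x => dens_nonneg lam x),
    integral_Iic_dens hlam t]

lemma integral_g_minLaw {lam : ℕ} (hlam : 1 ≤ lam) (g : ℝ → ℝ) :
    ∫ x, g x ∂(minLaw lam) = ∫ x, dens lam x * g x := by
  rw [minLaw_eq hlam]
  have hmeas : Measurable fun x => (dens lam x).toNNReal :=
    (continuous_dens lam).measurable.real_toNNReal
  have heq : (fun x => ENNReal.ofReal (dens lam x)) =
      fun x => ((dens lam x).toNNReal : ℝ≥0∞) := rfl
  rw [heq, integral_withDensity_eq_integral_smul hmeas]
  congr 1
  funext x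
  rw [NNReal.smul_def, Real.coe_toNNReal _ (dens_nonneg lam x), smul_eq_mul]

lemma hasDerivAt_B {lam : ℕ} (hlam : 2 ≤ lam) (x : ℝ) :
    HasDerivAt (fun y => -y * dens lam y)
      (x ^ 2 * dens lam x - dens lam x +
        (lam : ℝ) * ((lam - 1 : ℕ) : ℝ) * (x * phi x ^ 2 * Q x ^ (lam - 2))) x := by
  have h := ((hasDerivAt_id x).neg).mul (hasDerivAt_dens (by omega : 1 ≤ lam) x)
  have he : lam - 1 - 1 = lam - 2 := by omega
  rw [he] at h
  refine h.congr_deriv ?_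
  simp only [Pi.neg_apply, id_eq]
  ring

lemma integral_sq_mul_dens_eq {lam : ℕ} (hlam : 2 ≤ lam) :
    ∫ x, x ^ 2 * dens lam x =
      1 - (lam : ℝ) * ((lam - 1 : ℕ) : ℝ) * ∫ x, x * phi x ^ 2 * Q x ^ (lam - 2) := by
  have hint : Integrable (fun x => x ^ 2 * dens lam x - dens lam x +
      (lam : ℝ) * ((lam - 1 : ℕ) : ℝ) * (x * phi x ^ 2 * Q x ^ (lam - 2))) :=
    ((integrable_sq_mul_dens lam).sub (integrable_dens lam)).add
      ((integrable_mul_phisq_pow (lam - 2)).const_mul _)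
  have h0 := integral_of_hasDerivAt_of_tendsto (fun x => hasDerivAt_B hlam x) hint
    (tendsto_mul_dens_atBot lam) (tendsto_mul_dens_atTop lam)
  rw [sub_zero] at h0
  have hA : Integrable fun x => x ^ 2 * dens lam x - dens lam x :=
    (integrable_sq_mul_dens lam).sub (integrable_dens lam)
  have hB : Integrable fun x =>
      (lam : ℝ) * ((lam - 1 : ℕ) : ℝ) * (x * phi x ^ 2 * Q x ^ (lam - 2)) :=
    (integrable_mul_phisq_pow (lam - 2)).const_mul _
  have h1 : ∫ x, (x ^ 2 * dens lam x - dens lam x +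
      (lam : ℝ) * ((lam - 1 : ℕ) : ℝ) * (x * phi x ^ 2 * Q x ^ (lam - 2))) =
      (∫ x, (x ^ 2 * dens lam x - dens lam x)) +
      ∫ x, (lam : ℝ) * ((lam - 1 : ℕ) : ℝ) * (x * phi x ^ 2 * Q x ^ (lam - 2)) :=
    integral_add hA hB
  have h2 : ∫ x, (x ^ 2 * dens lam x - dens lam x) =
      (∫ x, x ^ 2 * dens lam x) - ∫ x, dens lam x :=
    integral_sub (integrable_sq_mul_dens lam) (integrable_dens lam)
  rw [h1, h2, integral_const_mul, integral_dens (by omega : 1 ≤ lam)] at h0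
  linarith

lemma hasDerivAt_A {lam : ℕ} (hlam : 2 ≤ lam) (x : ℝ) :
    HasDerivAt (fun y => -dens lam y)
      (x * dens lam x +
        (lam : ℝ) * ((lam - 1 : ℕ) : ℝ) * (phi x ^ 2 * Q x ^ (lam - 2))) x := by
  have h := (hasDerivAt_dens (by omega : 1 ≤ lam) x).neg
  have he : lam - 1 - 1 = lam - 2 := by omega
  rw [he] at h
  refine h.congr_deriv ?_
  ring

lemma integral_mul_dens_eq {lam : ℕ} (hlam : 2 ≤ lam) :
    ∫ x, x * dens lam x =
      -((lam : ℝ) * ((lam - 1 : ℕ) : ℝ)) * ∫ x, phi x ^ 2 * Q x ^ (lam - 2) := by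
  have hint : Integrable (fun x => x * dens lam x +
      (lam : ℝ) * ((lam - 1 : ℕ) : ℝ) * (phi x ^ 2 * Q x ^ (lam - 2))) :=
    (integrable_mul_dens lam).add ((integrable_phisq_pow (lam - 2)).const_mul _)
  have h0 := integral_of_hasDerivAt_of_tendsto (fun x => hasDerivAt_A hlam x) hint
    (by simpa using (tendsto_dens_atBot lam).neg)
    (by simpa using (tendsto_dens_atTop lam).neg)
  rw [sub_zero] at h0
  have h1 : ∫ x, (x * dens lam x +
      (lam : ℝ) * ((lam - 1 : ℕ) : ℝ) * (phi x ^ 2 * Q x ^ (lam - 2))) =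
      (∫ x, x * dens lam x) +
      ∫ x, (lam : ℝ) * ((lam - 1 : ℕ) : ℝ) * (phi x ^ 2 * Q x ^ (lam - 2)) :=
    integral_add (integrable_mul_dens lam) ((integrable_phisq_pow (lam - 2)).const_mul _)
  rw [h1, integral_const_mul] at h0
  linarith

lemma I0_pos (e : ℕ) : 0 < ∫ x, phi x ^ 2 * Q x ^ e := by
  rw [integral_pos_iff_support_of_nonneg_ae
    (ae_of_all _ fun x => mul_nonneg (sq_nonneg _) (pow_nonneg (Q_nonneg x) e))
    (integrable_phisq_pow e)]
  have hs : Function.support (fun x => phi x ^ 2 * Q x ^ e) = Set.univ := by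
    ext x
    simp only [Function.mem_support, Set.mem_univ, iff_true]
    exact (mul_pos (pow_pos (phi_pos x) 2) (pow_pos (Q_pos x) e)).ne'
  rw [hs, Real.volume_univ]
  exact ENNReal.zero_lt_top

lemma integrable_G (e : ℕ) : Integrable (fun x => x * phi x ^ 2 * Q (-x) ^ e) := by
  have h := ((integrable_mul_phisq_pow e).comp_neg (μ := volume)).neg
  refine h.congr (ae_of_all _ fun x => ?_)
  simp only [Pi.neg_apply]
  rw [phi_even]
  ring

lemma J_split (e : ℕ) : ∫ x, x * phi x ^ 2 * Q x ^ e =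
    -∫ x in Set.Ioi (0:ℝ), x * phi x ^ 2 * (Q (-x) ^ e - Q x ^ e) := by
  have hg : Integrable (fun x => x * phi x ^ 2 * Q x ^ e) := integrable_mul_phisq_pow e
  have hsplit : ∫ x, x * phi x ^ 2 * Q x ^ e =
      (∫ x in Set.Iic (0:ℝ), x * phi x ^ 2 * Q x ^ e) +
      ∫ x in Set.Ioi (0:ℝ), x * phi x ^ 2 * Q x ^ e := by
    rw [← setIntegral_union (Set.Iic_disjoint_Ioi le_rfl) measurableSet_Ioi
      hg.integrableOn hg.integrableOn, Set.Iic_union_Ioi, setIntegral_univ]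
  have hneg : ∫ x in Set.Iic (0:ℝ), x * phi x ^ 2 * Q x ^ e =
      ∫ x in Set.Ioi (0:ℝ), (-x) * phi x ^ 2 * Q (-x) ^ e := by
    have h1 := integral_comp_neg_Ioi (c := (0:ℝ)) (f := fun x => x * phi x ^ 2 * Q x ^ e)
    rw [neg_zero] at h1
    rw [← h1]
    refine setIntegral_congr_fun measurableSet_Ioi fun x _ => ?_
    rw [phi_even]
  have hA : IntegrableOn (fun x => -x * phi x ^ 2 * Q (-x) ^ e) (Set.Ioi (0:ℝ)) := by
    refine ((integrable_G e).neg.congr (ae_of_all _ fun x => ?_)).integrableOn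
    simp only [Pi.neg_apply]
    ring
  rw [hsplit, hneg, ← integral_add hA hg.integrableOn, ← integral_neg]
  refine setIntegral_congr_fun measurableSet_Ioi fun x _ => ?_
  ring

lemma J_nonpos (e : ℕ) : ∫ x, x * phi x ^ 2 * Q x ^ e ≤ 0 := by
  rw [J_split]
  rw [neg_nonpos]
  apply setIntegral_nonneg measurableSet_Ioi
  intro x hx
  have hx0 : (0:ℝ) < x := hx
  have hQ : Q x ^ e ≤ Q (-x) ^ e :=
    pow_le_pow_left₀ (Q_nonneg x) (Q_strictAnti.antitone (by linarith)) e
  have h2 : (0:ℝ) ≤ phi x ^ 2 := sq_nonneg _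
  exact mul_nonneg (mul_nonneg hx0.le h2) (sub_nonneg.mpr hQ)

lemma J_neg {e : ℕ} (he : 1 ≤ e) : ∫ x, x * phi x ^ 2 * Q x ^ e < 0 := by
  rw [J_split, neg_lt, neg_zero]
  have hw : ∀ x ∈ Set.Ioi (0:ℝ), 0 < x * phi x ^ 2 * (Q (-x) ^ e - Q x ^ e) := by
    intro x hx
    have hx0 : (0:ℝ) < x := hx
    have hQ : Q x ^ e < Q (-x) ^ e :=
      pow_lt_pow_left₀ (Q_strictAnti (by linarith : -x < x)) (Q_nonneg x) (by omega)
    have h2 : (0:ℝ) < phi x ^ 2 := pow_pos (phi_pos x) 2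
    exact mul_pos (mul_pos hx0 h2) (sub_pos.mpr hQ)
  have hint : IntegrableOn (fun x => x * phi x ^ 2 * (Q (-x) ^ e - Q x ^ e))
      (Set.Ioi (0:ℝ)) := by
    have : Integrable (fun x => x * phi x ^ 2 * (Q (-x) ^ e - Q x ^ e)) := by
      have := (integrable_G e).sub (integrable_mul_phisq_pow e)
      refine this.congr (ae_of_all _ fun x => ?_)
      simp only [Pi.sub_apply]
      ring
    exact this.integrableOn
  rw [setIntegral_pos_iff_support_of_nonneg_ae _ hint]
  · have hsup : Set.Ioi (0:ℝ) ⊆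
        Function.support (fun x => x * phi x ^ 2 * (Q (-x) ^ e - Q x ^ e)) ∩ Set.Ioi 0 :=
      fun x hx => ⟨(hw x hx).ne', hx⟩
    calc (0:ℝ≥0∞) < volume (Set.Ioi (0:ℝ)) := by rw [Real.volume_Ioi]; exact ENNReal.zero_lt_top
      _ ≤ _ := measure_mono hsup
  · rw [EventuallyLE, ae_restrict_iff' measurableSet_Ioi]
    exact ae_of_all _ fun x hx => (hw x hx).le

end S15

/-- If `λ ≥ 2` and `0 < c < 1`, or `λ ≥ 3` and `0 < c ≤ 1`, then
`2(1−c) E(N_{1:λ})² + c (E(N_{1:λ}²) − 1) > 0`; consequently the divergence rate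
`(1/(2 d_σ n)) (2(1−c) E(N_{1:λ})² + c (E(N_{1:λ}²) − 1))` of the step-size of the
`(1,λ)`-CSA-ES is strictly positive for any `d_σ > 0` and `n ≥ 1`. -/
theorem stmt_15 {lam : ℕ} {c : ℝ}
    (h : (2 ≤ lam ∧ 0 < c ∧ c < 1) ∨ (3 ≤ lam ∧ 0 < c ∧ c ≤ 1)) :
    0 < 2 * (1 - c) * (∫ x, x ∂(minLaw lam)) ^ 2 +
      c * ((∫ x, x ^ 2 ∂(minLaw lam)) - 1) ∧
    ∀ d : ℝ, 0 < d → ∀ n : ℕ, 1 ≤ n →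
      0 < (1 / (2 * d * n)) * (2 * (1 - c) * (∫ x, x ∂(minLaw lam)) ^ 2 +
        c * ((∫ x, x ^ 2 ∂(minLaw lam)) - 1)) := by
  have hlam2 : 2 ≤ lam := by rcases h with ⟨h1, _⟩ | ⟨h1, _⟩ <;> omega
  have hc0 : 0 < c := by rcases h with ⟨_, h2, _⟩ | ⟨_, h2, _⟩ <;> exact h2
  have h1 : ∫ x, x ∂(minLaw lam) = ∫ x, S15.dens lam x * x :=
    S15.integral_g_minLaw (by omega) _
  have h1' : (∫ x, S15.dens lam x * x) = ∫ x, x * S15.dens lam x := by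
    congr 1; funext x; ring
  have h2 : ∫ x, x ^ 2 ∂(minLaw lam) = ∫ x, S15.dens lam x * x ^ 2 :=
    S15.integral_g_minLaw (by omega) _
  have h2' : (∫ x, S15.dens lam x * x ^ 2) = ∫ x, x ^ 2 * S15.dens lam x := by
    congr 1; funext x; ring
  set I0 := ∫ x, S15.phi x ^ 2 * S15.Q x ^ (lam - 2) with hI0def
  set J := ∫ x, x * S15.phi x ^ 2 * S15.Q x ^ (lam - 2) with hJdef
  have hmval : ∫ x, x ∂(minLaw lam) = -((lam : ℝ) * ((lam - 1 : ℕ) : ℝ)) * I0 := by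
    rw [h1, h1', S15.integral_mul_dens_eq hlam2]
  have hsval : ∫ x, x ^ 2 ∂(minLaw lam) = 1 - (lam : ℝ) * ((lam - 1 : ℕ) : ℝ) * J := by
    rw [h2, h2', S15.integral_sq_mul_dens_eq hlam2]
  have hL : (0 : ℝ) < (lam : ℝ) * ((lam - 1 : ℕ) : ℝ) := by
    have hl1 : (0:ℝ) < (lam : ℝ) := by exact_mod_cast (by omega : 0 < lam)
    have hl2 : (0:ℝ) < ((lam - 1 : ℕ) : ℝ) := by exact_mod_cast (by omega : 0 < lam - 1)
    exact mul_pos hl1 hl2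
  have hI0pos : 0 < I0 := S15.I0_pos (lam - 2)
  have hJle : J ≤ 0 := S15.J_nonpos (lam - 2)
  have hmneg : ∫ x, x ∂(minLaw lam) < 0 := by
    rw [hmval]; nlinarith
  have hm2pos : 0 < (∫ x, x ∂(minLaw lam)) ^ 2 := by nlinarith
  have hsge : 1 ≤ ∫ x, x ^ 2 ∂(minLaw lam) := by rw [hsval]; nlinarith
  have hmain : 0 < 2 * (1 - c) * (∫ x, x ∂(minLaw lam)) ^ 2 +
      c * ((∫ x, x ^ 2 ∂(minLaw lam)) - 1) := by
    rcases h with ⟨_, hc, hlt⟩ | ⟨h3, hc, hle⟩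
    · nlinarith
    · have hJlt : J < 0 := S15.J_neg (by omega : 1 ≤ lam - 2)
      have hsgt : 1 < ∫ x, x ^ 2 ∂(minLaw lam) := by rw [hsval]; nlinarith
      nlinarith [sq_nonneg (∫ x, x ∂(minLaw lam))]
  refine ⟨hmain, fun d hd n hn => ?_⟩
  have hn' : (0 : ℝ) < (n : ℝ) := by exact_mod_cast (by omega : 0 < n)
  have hfac : (0 : ℝ) < 1 / (2 * d * n) :=
    one_div_pos.mpr (mul_pos (mul_pos two_pos hd) hn')
  exact mul_pos hfac hmain
end

section
/- Let n ≥ 1, λ ≥ 1, 0 < c < 1, and set a = 1 − c. Let p_0 be a standard Gaussian random vector in ℝⁿ and let (ξ_t)_{t∈ℕ} be i.i.d. ℝⁿ-valued random vectors, independent of p_0, each distributed as the vector (N_{1:λ}, N_2, …, N_n) with independent coordinates, first coordinate distributed as the minimum of λ i.i.d. standard normals and the other n−1 coordinates standard normal. Define p_{t+1} = (1−c) p_t + √(c(2−c)) ξ_t. Then lim_{t→∞} E([p_t]_1⁴) = ((1−a²)²/(1−a⁴)) · (k₄ + k₃₁ + k₂₂ + k₂₁₁ + k₁₁₁₁), where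 k₄ = E(N_{1:λ}⁴), k₃₁ = 4 (a(1+a+2a²)/(1−a³)) E(N_{1:λ}³) E(N_{1:λ}), k₂₂ = 6 (a²/(1−a²)) E(N_{1:λ}²)², k₂₁₁ = 12 (a³(1+2a+3a²)/((1−a²)(1−a³))) E(N_{1:λ}²) E(N_{1:λ})², and k₁₁₁₁ = 24 (a⁶/((1−a)(1−a²)(1−a³))) E(N_{1:λ})⁴. -/
open MeasureTheory ProbabilityTheory Filter Real

lemma aux_tendsto_linRec {r : ℝ} (hr0 : 0 ≤ r) (hr : r < 1) {x d : ℕ → ℝ} {L : ℝ}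
    (hx : ∀ t, x (t + 1) = r * x t + d t) (hd : Tendsto d atTop (nhds L)) :
    Tendsto x atTop (nhds (L / (1 - r))) := by
  set M : ℝ := L / (1 - r) with hM
  have hrne : 1 - r ≠ 0 := by linarith
  have hLM : L = (1 - r) * M := by rw [hM]; field_simp
  have key : Tendsto (fun t => x t - M) atTop (nhds 0) := by
    set y : ℕ → ℝ := fun t => x t - M with hy
    set e : ℕ → ℝ := fun t => d t - L with he
    have hyrec : ∀ t, y (t + 1) = r * y t + e t := by
      intro t
      show x (t + 1) - M = r * (x t - M) + (d t - L)
      rw [hx t, hLM]; ring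
    have he0 : Tendsto e atTop (nhds 0) := by
      simpa [he] using hd.sub (tendsto_const_nhds (x := L))
    rw [Metric.tendsto_atTop]
    intro ε hε
    have h1r : 0 < 1 - r := by linarith
    have hε2 : 0 < ε * (1 - r) / 2 := by
      apply div_pos (mul_pos hε h1r); norm_num
    obtain ⟨N, hN⟩ := (Metric.tendsto_atTop.mp he0) (ε * (1 - r) / 2) hε2
    have claim : ∀ m, |y (N + m)| ≤ r ^ m * |y N| + ε / 2 := by
      intro m
      induction m with
      | zero => simp; positivity
      | succ m ih =>
        have hrec := hyrec (N + m)
        have heb : |e (N + m)| ≤ ε * (1 - r) / 2 := by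
          have := hN (N + m) (Nat.le_add_right _ _)
          rw [Real.dist_eq, sub_zero] at this
          linarith
        have : |y (N + m + 1)| ≤ r * |y (N + m)| + ε * (1 - r) / 2 := by
          rw [hrec]
          calc |r * y (N + m) + e (N + m)| ≤ |r * y (N + m)| + |e (N + m)| := abs_add_le _ _
            _ ≤ r * |y (N + m)| + ε * (1 - r) / 2 := by
                rw [abs_mul, abs_of_nonneg hr0]; linarith
        have h2 : r * |y (N + m)| ≤ r * (r ^ m * |y N| + ε / 2) :=
          mul_le_mul_of_nonneg_left ih hr0
        have : |y (N + m + 1)| ≤ r ^ (m + 1) * |y N| + (r * ε / 2 + ε * (1 - r) / 2) := by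
          rw [pow_succ]; nlinarith
        calc |y (N + (m + 1))| = |y (N + m + 1)| := by ring_nf
          _ ≤ r ^ (m + 1) * |y N| + (r * ε / 2 + ε * (1 - r) / 2) := this
          _ ≤ r ^ (m + 1) * |y N| + ε / 2 := by nlinarith
    have hpow : Tendsto (fun m => r ^ m * |y N|) atTop (nhds 0) := by
      simpa using (tendsto_pow_atTop_nhds_zero_of_lt_one hr0 hr).mul_const |y N|
    obtain ⟨M₀, hM₀⟩ := (Metric.tendsto_atTop.mp hpow) (ε / 2) (by positivity)
    refine ⟨N + M₀, fun t ht => ?_⟩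
    have h1 : t = N + (t - N) := by omega
    have h2 : M₀ ≤ t - N := by omega
    have h3 := claim (t - N)
    have h4 := hM₀ (t - N) h2
    rw [Real.dist_eq, sub_zero] at h4
    have h5 : r ^ (t - N) * |y N| < ε / 2 := by
      exact lt_of_le_of_lt (le_abs_self _) h4
    rw [Real.dist_eq, sub_zero]
    have h6 : y t = y (N + (t - N)) := by rw [← h1]
    rw [h6]; linarith
  have h7 : Tendsto (fun t => (x t - M) + M) atTop (nhds (0 + M)) :=
    key.add tendsto_const_nhds
  simp only [sub_add_cancel, zero_add] at h7
  exact h7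

lemma aux_pi_map_eval {ι : Type*} [Fintype ι] {α : ι → Type*}
    [∀ i, MeasurableSpace (α i)] (μ : ∀ i, Measure (α i))
    [∀ i, IsProbabilityMeasure (μ i)] (i : ι) :
    (Measure.pi μ).map (fun x => x i) = μ i := by
  classical
  ext s hs
  rw [Measure.map_apply (measurable_pi_apply i) hs, Set.eval_preimage, Measure.pi_pi]
  rw [Finset.prod_eq_single i]
  · simp
  · intro j _ hj; simp [Function.update_of_ne hj]
  · simp

lemma aux_integrable_abs_pow_gaussian (k : ℕ) :
    Integrable (fun x : ℝ => |x| ^ k) (gaussianReal 0 1) := by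
  rw [gaussianReal_of_var_ne_zero _ one_ne_zero,
    integrable_withDensity_iff (measurable_gaussianPDF 0 1)
      (ae_of_all _ fun x => ENNReal.ofReal_lt_top)]
  have hpdf : ∀ x : ℝ, (gaussianPDF 0 1 x).toReal = gaussianPDFReal 0 1 x := fun x =>
    ENNReal.toReal_ofReal (gaussianPDFReal_nonneg 0 1 x)
  simp only [hpdf]
  have hC : (0:ℝ) < (Real.sqrt (2 * π * ((1:NNReal):ℝ)))⁻¹ := by
    rw [inv_pos]
    apply Real.sqrt_pos.mpr
    have := Real.pi_pos
    simp only [NNReal.coe_one, mul_one]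
    linarith
  set C : ℝ := (Real.sqrt (2 * π * ((1:NNReal):ℝ)))⁻¹ with hCdef
  have hmaj : Integrable (fun x : ℝ =>
      C * ((1 + x ^ (2 * k)) * Real.exp (-(1/2) * x ^ 2))) volume := by
    apply Integrable.const_mul
    have h1 : Integrable (fun x : ℝ => Real.exp (-(1/2) * x ^ 2)) volume :=
      integrable_exp_neg_mul_sq (by norm_num)
    have h2 : Integrable (fun x : ℝ => x ^ (2 * k) * Real.exp (-(1/2) * x ^ 2)) volume := by
      have hcast : (-1:ℝ) < ((2 * k : ℕ) : ℝ) := by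
        have : (0:ℝ) ≤ ((2 * k : ℕ) : ℝ) := Nat.cast_nonneg _
        linarith
      have := integrable_rpow_mul_exp_neg_mul_sq (b := 1/2) (by norm_num)
        (s := ((2 * k : ℕ) : ℝ)) hcast
      simp only [Real.rpow_natCast] at this
      exact this
    have := h1.add h2
    apply this.congr
    filter_upwards with x
    simp only [Pi.add_apply]
    ring
  apply hmaj.mono'
  · exact (measurable_abs.pow_const k).mul (measurable_gaussianPDFReal 0 1)
      |>.aestronglyMeasurable
  · filter_upwards with x
    have hpdfval : gaussianPDFReal 0 1 x = C * Real.exp (-(1/2) * x ^ 2) := by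
      simp only [gaussianPDFReal, NNReal.coe_one, mul_one, sub_zero, hCdef]
      rw [show -x ^ 2 / 2 = -(1/2) * x ^ 2 by ring]
    have hb : |x| ^ k ≤ 1 + x ^ (2 * k) := by
      have hx2 : x ^ (2 * k) = |x| ^ (2 * k) := by
        rw [pow_mul, pow_mul, sq_abs]
      rw [hx2]
      rcases le_total |x| 1 with h | h
      · have h1 := pow_le_one₀ (n := k) (abs_nonneg x) h
        have h2 : (0:ℝ) ≤ |x| ^ (2 * k) := pow_nonneg (abs_nonneg x) _
        linarith
      · have h2 := pow_le_pow_right₀ h (Nat.le_mul_of_pos_left k two_pos)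
        linarith
    have hE : (0:ℝ) < Real.exp (-(1/2) * x ^ 2) := Real.exp_pos _
    rw [Real.norm_eq_abs, abs_mul, abs_pow, abs_abs,
      abs_of_nonneg (gaussianPDFReal_nonneg 0 1 x), hpdfval]
    calc |x| ^ k * (C * Real.exp (-(1/2) * x ^ 2))
        = (C * Real.exp (-(1/2) * x ^ 2)) * (|x| ^ k) := by ring
      _ ≤ (C * Real.exp (-(1/2) * x ^ 2)) * (1 + x ^ (2 * k)) :=
          mul_le_mul_of_nonneg_left hb (by positivity)
      _ = C * ((1 + x ^ (2 * k)) * Real.exp (-(1/2) * x ^ 2)) := by ring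

lemma aux_integrable_pow_gaussian (k : ℕ) :
    Integrable (fun x : ℝ => x ^ k) (gaussianReal 0 1) := by
  apply (aux_integrable_abs_pow_gaussian k).mono'
    (measurable_id'.pow_const k).aestronglyMeasurable
  filter_upwards with x
  rw [Real.norm_eq_abs, abs_pow]

lemma aux_integrable_pow_minLaw (lam : ℕ) (hlam : 1 ≤ lam) (k : ℕ) :
    Integrable (fun x : ℝ => x ^ k) (minLaw lam) := by
  have hne : Nonempty (Fin lam) := ⟨⟨0, hlam⟩⟩
  have hinf : Measurable fun x : Fin lam → ℝ => ⨅ i, x i :=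
    Measurable.iInf fun i => measurable_pi_apply i
  unfold minLaw
  rw [integrable_map_measure (measurable_id'.pow_const k).aestronglyMeasurable
    hinf.aemeasurable]
  have hmaj : Integrable (fun x : Fin lam → ℝ => ∑ i, |x i| ^ k)
      (Measure.pi fun _ => gaussianReal 0 1) := by
    apply integrable_finset_sum
    intro i _
    have h := aux_integrable_abs_pow_gaussian k
    rw [← aux_pi_map_eval (fun _ : Fin lam => gaussianReal 0 1) i] at h
    exact (integrable_map_measure (measurable_abs.pow_const k).aestronglyMeasurable
        (measurable_pi_apply i).aemeasurable).mp h
  apply hmaj.mono' ((measurable_id'.pow_const k).comp hinf).aestronglyMeasurable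
  filter_upwards with x
  simp only [Function.comp_apply]
  obtain ⟨i₀, hi₀⟩ := exists_eq_ciInf_of_finite (f := fun i => x i)
  rw [Real.norm_eq_abs, abs_pow, ← hi₀]
  exact Finset.single_le_sum (f := fun i => |x i| ^ k)
    (fun i _ => pow_nonneg (abs_nonneg _) k) (Finset.mem_univ i₀)

lemma aux_integral_indep_mul {Ω : Type*} [MeasureSpace Ω] {f g : Ω → ℝ}
    (h : IndepFun f g ℙ) (hf : AEStronglyMeasurable f ℙ) (hg : AEStronglyMeasurable g ℙ) :
    ∫ ω, f ω * g ω ∂ℙ = (∫ ω, f ω ∂ℙ) * ∫ ω, g ω ∂ℙ :=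
  h.integral_fun_mul_eq_mul_integral hf hg

lemma aux_integrable_indep_mul {Ω : Type*} [MeasureSpace Ω] {f g : Ω → ℝ}
    (h : IndepFun f g ℙ) (hf : Integrable f ℙ) (hg : Integrable g ℙ) :
    Integrable (fun ω => f ω * g ω) ℙ :=
  h.integrable_mul hf hg

lemma aux_main {Ω : Type*} [MeasureSpace Ω] [IsProbabilityMeasure (ℙ : Measure Ω)]
    (a b : ℝ) (ha0 : 0 < a) (ha1 : a < 1) (hb2 : b ^ 2 = 1 - a ^ 2)
    (ν : Measure ℝ) [IsProbabilityMeasure ν]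
    (hνint : ∀ k, Integrable (fun x : ℝ => x ^ k) ν)
    (X Y : ℕ → Ω → ℝ) (hXmeas : ∀ t, Measurable (X t)) (hYmeas : ∀ t, Measurable (Y t))
    (hYlaw : ∀ t, Measure.map (Y t) ℙ = ν)
    (hX0int : ∀ k, Integrable (fun ω => X 0 ω ^ k) ℙ)
    (hindep : ∀ t, IndepFun (X t) (Y t) ℙ)
    (hrec : ∀ t ω, X (t + 1) ω = a * X t ω + b * Y t ω) :
    Tendsto (fun t : ℕ => ∫ ω, (X t ω) ^ 4 ∂ℙ) atTop
      (nhds (((1 - a ^ 2) ^ 2 / (1 - a ^ 4)) *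
        ((∫ x, x ^ 4 ∂ν) +
          4 * (a * (1 + a + 2 * a ^ 2) / (1 - a ^ 3)) *
            (∫ x, x ^ 3 ∂ν) * (∫ x, x ∂ν) +
          6 * (a ^ 2 / (1 - a ^ 2)) * (∫ x, x ^ 2 ∂ν) ^ 2 +
          12 * (a ^ 3 * (1 + 2 * a + 3 * a ^ 2) / ((1 - a ^ 2) * (1 - a ^ 3))) *
            (∫ x, x ^ 2 ∂ν) * (∫ x, x ∂ν) ^ 2 +
          24 * (a ^ 6 / ((1 - a) * (1 - a ^ 2) * (1 - a ^ 3))) *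
            (∫ x, x ∂ν) ^ 4))) := by
  -- basic nonvanishing facts
  have hpow1 : ∀ k : ℕ, 1 ≤ k → a ^ k < 1 := fun k hk => pow_lt_one₀ ha0.le ha1 (by omega)
  have h1 : (1:ℝ) - a ≠ 0 := by have := hpow1 1 le_rfl; simp at this; linarith
  have h2 : (1:ℝ) - a ^ 2 ≠ 0 := by have := hpow1 2 (by norm_num); linarith
  have h3 : (1:ℝ) - a ^ 3 ≠ 0 := by have := hpow1 3 (by norm_num); linarith
  have h4 : (1:ℝ) - a ^ 4 ≠ 0 := by have := hpow1 4 (by norm_num); linarith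
  set μ1 : ℝ := ∫ x, x ∂ν with hμ1
  set μ2 : ℝ := ∫ x, x ^ 2 ∂ν with hμ2
  set μ3 : ℝ := ∫ x, x ^ 3 ∂ν with hμ3
  set μ4 : ℝ := ∫ x, x ^ 4 ∂ν with hμ4
  -- moments of Y
  have hYmom : ∀ t j, (∫ ω, Y t ω ^ j ∂ℙ) = ∫ x, x ^ j ∂ν := by
    intro t j
    rw [← hYlaw t, integral_map (hYmeas t).aemeasurable
      (measurable_id'.pow_const j).aestronglyMeasurable]
  have hYint : ∀ t j, Integrable (fun ω => Y t ω ^ j) ℙ := by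
    intro t j
    have h := hνint j
    rw [← hYlaw t] at h
    exact (integrable_map_measure (measurable_id'.pow_const j).aestronglyMeasurable
      (hYmeas t).aemeasurable).mp h
  have hpow_indep : ∀ t j l, IndepFun (fun ω => X t ω ^ j) (fun ω => Y t ω ^ l) ℙ :=
    fun t j l => (hindep t).comp (measurable_id'.pow_const j) (measurable_id'.pow_const l)
  -- integrability of powers of X
  have hXint : ∀ t j, Integrable (fun ω => X t ω ^ j) ℙ := by
    intro t
    induction t with
    | zero => exact hX0int
    | succ t ih =>
      intro j
      have hexp : (fun ω => X (t + 1) ω ^ j) = fun ω =>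
          ∑ l ∈ Finset.range (j + 1),
            (a ^ l * b ^ (j - l) * (j.choose l : ℝ)) * (X t ω ^ l * Y t ω ^ (j - l)) := by
        funext ω
        rw [hrec t ω, add_pow]
        exact Finset.sum_congr rfl fun l _ => by ring
      rw [hexp]
      apply integrable_finset_sum
      intro l _
      exact (aux_integrable_indep_mul (hpow_indep t l (j - l)) (ih l)
        (hYint t (j - l))).const_mul _
  -- the moment recursion
  have hmom : ∀ t j, (∫ ω, X (t + 1) ω ^ j ∂ℙ) =
      ∑ l ∈ Finset.range (j + 1),
        (j.choose l : ℝ) * (a ^ l * b ^ (j - l)) *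
          (∫ ω, X t ω ^ l ∂ℙ) * (∫ x, x ^ (j - l) ∂ν) := by
    intro t j
    have hexp : (fun ω => X (t + 1) ω ^ j) = fun ω =>
        ∑ l ∈ Finset.range (j + 1),
          (a ^ l * b ^ (j - l) * (j.choose l : ℝ)) * (X t ω ^ l * Y t ω ^ (j - l)) := by
      funext ω
      rw [hrec t ω, add_pow]
      exact Finset.sum_congr rfl fun l _ => by ring
    calc (∫ ω, X (t + 1) ω ^ j ∂ℙ)
        = ∫ ω, ∑ l ∈ Finset.range (j + 1),
            (a ^ l * b ^ (j - l) * (j.choose l : ℝ)) *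
              (X t ω ^ l * Y t ω ^ (j - l)) ∂ℙ := by rw [← hexp]
      _ = ∑ l ∈ Finset.range (j + 1), ∫ ω,
            (a ^ l * b ^ (j - l) * (j.choose l : ℝ)) *
              (X t ω ^ l * Y t ω ^ (j - l)) ∂ℙ := by
          apply integral_finset_sum
          intro l _
          exact (aux_integrable_indep_mul (hpow_indep t l (j - l)) (hXint t l)
            (hYint t (j - l))).const_mul _
      _ = ∑ l ∈ Finset.range (j + 1),
            (j.choose l : ℝ) * (a ^ l * b ^ (j - l)) *
              (∫ ω, X t ω ^ l ∂ℙ) * (∫ x, x ^ (j - l) ∂ν) := by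
          apply Finset.sum_congr rfl
          intro l _
          rw [integral_const_mul, aux_integral_indep_mul (hpow_indep t l (j - l))
            ((hXint t l).aestronglyMeasurable) ((hYint t (j - l)).aestronglyMeasurable),
            hYmom t (j - l)]
          ring
  have hm0 : ∀ t, (∫ ω, X t ω ^ 0 ∂ℙ) = 1 := by intro t; simp
  have hμ0 : (∫ x, x ^ 0 ∂ν) = 1 := by simp
  -- order 1
  have T1 : Tendsto (fun t => ∫ ω, X t ω ∂ℙ) atTop (nhds (b * μ1 / (1 - a))) := by
    apply aux_tendsto_linRec ha0.le ha1 (d := fun _ => b * μ1)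
    · intro t
      have h := hmom t 1
      rw [Finset.sum_range_succ, Finset.sum_range_succ, Finset.sum_range_zero] at h
      norm_num [hm0 t, hμ0] at h
      linear_combination h
    · exact tendsto_const_nhds
  set e1 : ℝ := μ1 / (1 - a) with he1
  have hT1v : b * μ1 / (1 - a) = b * e1 := by rw [he1]; ring
  rw [hT1v] at T1
  -- order 2
  set e2 : ℝ := (2 * a * μ1 * e1 + μ2) / (1 - a ^ 2) with he2
  have T2 : Tendsto (fun t => ∫ ω, X t ω ^ 2 ∂ℙ) atTop
      (nhds ((2 * a * b * μ1 * (b * e1) + b ^ 2 * μ2) / (1 - a ^ 2))) := by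
    apply aux_tendsto_linRec (pow_nonneg ha0.le 2) (hpow1 2 (by norm_num))
      (d := fun t => 2 * a * b * μ1 * (∫ ω, X t ω ∂ℙ) + b ^ 2 * μ2)
    · intro t
      have h := hmom t 2
      rw [Finset.sum_range_succ, Finset.sum_range_succ, Finset.sum_range_succ,
        Finset.sum_range_zero] at h
      norm_num [hm0 t, hμ0] at h
      linear_combination h
    · exact (T1.const_mul (2 * a * b * μ1)).add_const (b ^ 2 * μ2)
  have hT2v : (2 * a * b * μ1 * (b * e1) + b ^ 2 * μ2) / (1 - a ^ 2) = b ^ 2 * e2 := by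
    rw [he2]; field_simp
  rw [hT2v] at T2
  -- order 3
  set e3 : ℝ := (3 * a ^ 2 * μ1 * e2 + 3 * a * μ2 * e1 + μ3) / (1 - a ^ 3) with he3
  have T3 : Tendsto (fun t => ∫ ω, X t ω ^ 3 ∂ℙ) atTop
      (nhds ((3 * a ^ 2 * b * μ1 * (b ^ 2 * e2) + 3 * a * b ^ 2 * μ2 * (b * e1)
        + b ^ 3 * μ3) / (1 - a ^ 3))) := by
    apply aux_tendsto_linRec (pow_nonneg ha0.le 3) (hpow1 3 (by norm_num))
      (d := fun t => 3 * a ^ 2 * b * μ1 * (∫ ω, X t ω ^ 2 ∂ℙ)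
        + 3 * a * b ^ 2 * μ2 * (∫ ω, X t ω ∂ℙ) + b ^ 3 * μ3)
    · intro t
      have h := hmom t 3
      rw [Finset.sum_range_succ, Finset.sum_range_succ, Finset.sum_range_succ,
        Finset.sum_range_succ, Finset.sum_range_zero] at h
      norm_num [hm0 t, hμ0] at h
      linear_combination h
    · exact ((T2.const_mul (3 * a ^ 2 * b * μ1)).add
        (T1.const_mul (3 * a * b ^ 2 * μ2))).add_const (b ^ 3 * μ3)
  have hT3v : (3 * a ^ 2 * b * μ1 * (b ^ 2 * e2) + 3 * a * b ^ 2 * μ2 * (b * e1)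
      + b ^ 3 * μ3) / (1 - a ^ 3) = b ^ 3 * e3 := by
    rw [he3]; field_simp
  rw [hT3v] at T3
  -- order 4
  set e4 : ℝ := (4 * a ^ 3 * μ1 * e3 + 6 * a ^ 2 * μ2 * e2 + 4 * a * μ3 * e1 + μ4) /
    (1 - a ^ 4) with he4
  have T4 : Tendsto (fun t => ∫ ω, X t ω ^ 4 ∂ℙ) atTop
      (nhds ((4 * a ^ 3 * b * μ1 * (b ^ 3 * e3) + 6 * a ^ 2 * b ^ 2 * μ2 * (b ^ 2 * e2)
        + 4 * a * b ^ 3 * μ3 * (b * e1) + b ^ 4 * μ4) / (1 - a ^ 4))) := by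
    apply aux_tendsto_linRec (pow_nonneg ha0.le 4) (hpow1 4 (by norm_num))
      (d := fun t => 4 * a ^ 3 * b * μ1 * (∫ ω, X t ω ^ 3 ∂ℙ)
        + 6 * a ^ 2 * b ^ 2 * μ2 * (∫ ω, X t ω ^ 2 ∂ℙ)
        + 4 * a * b ^ 3 * μ3 * (∫ ω, X t ω ∂ℙ) + b ^ 4 * μ4)
    · intro t
      have h := hmom t 4
      rw [Finset.sum_range_succ, Finset.sum_range_succ, Finset.sum_range_succ,
        Finset.sum_range_succ, Finset.sum_range_succ, Finset.sum_range_zero] at h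
      norm_num [hm0 t, hμ0, Nat.choose] at h
      linear_combination h
    · exact (((T3.const_mul (4 * a ^ 3 * b * μ1)).add
        (T2.const_mul (6 * a ^ 2 * b ^ 2 * μ2))).add
        (T1.const_mul (4 * a * b ^ 3 * μ3))).add_const (b ^ 4 * μ4)
  have hT4v : (4 * a ^ 3 * b * μ1 * (b ^ 3 * e3) + 6 * a ^ 2 * b ^ 2 * μ2 * (b ^ 2 * e2)
      + 4 * a * b ^ 3 * μ3 * (b * e1) + b ^ 4 * μ4) / (1 - a ^ 4) = b ^ 4 * e4 := by
    rw [he4]; field_simp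
  rw [hT4v] at T4
  have hfinal : ((1 - a ^ 2) ^ 2 / (1 - a ^ 4)) *
      (μ4 + 4 * (a * (1 + a + 2 * a ^ 2) / (1 - a ^ 3)) * μ3 * μ1 +
        6 * (a ^ 2 / (1 - a ^ 2)) * μ2 ^ 2 +
        12 * (a ^ 3 * (1 + 2 * a + 3 * a ^ 2) / ((1 - a ^ 2) * (1 - a ^ 3))) * μ2 * μ1 ^ 2 +
        24 * (a ^ 6 / ((1 - a) * (1 - a ^ 2) * (1 - a ^ 3))) * μ1 ^ 4) = b ^ 4 * e4 := by
    rw [show b ^ 4 = (b ^ 2) ^ 2 by ring, hb2, he4, he3, he2, he1]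
    field_simp
    ring
  rw [hfinal]
  exact T4

/-- Limit of the fourth moment of the first coordinate of the
cumulative path of the `(1,λ)`-CSA-ES with cumulation parameter `0 < c < 1`,
where `a = 1 − c`:
`lim_t E([p_t]₁⁴) = ((1−a²)²/(1−a⁴)) (k₄ + k₃₁ + k₂₂ + k₂₁₁ + k₁₁₁₁)`. -/
theorem stmt_18 {n lam : ℕ} (hn : 1 ≤ n) (hlam : 1 ≤ lam)
    (c a : ℝ) (hc0 : 0 < c) (hc1 : c < 1) (ha : a = 1 - c)
    {Ω : Type*} [MeasureSpace Ω] [IsProbabilityMeasure (ℙ : Measure Ω)]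
    (Z : ℕ → Ω → (Fin n → ℝ)) (hZmeas : ∀ t, Measurable (Z t))
    (hZindep : iIndepFun Z ℙ)
    (hZ0 : Measure.map (Z 0) ℙ = Measure.pi fun _ : Fin n => gaussianReal 0 1)
    (hZlaw : ∀ t, Measure.map (Z (t + 1)) ℙ = xiLaw n lam)
    (p : ℕ → Ω → (Fin n → ℝ)) (hp0 : p 0 = Z 0)
    (hprec : ∀ t ω i, p (t + 1) ω i =
      (1 - c) * p t ω i + Real.sqrt (c * (2 - c)) * Z (t + 1) ω i)
    :
    Tendsto (fun t : ℕ => ∫ ω, (p t ω ⟨0, hn⟩) ^ 4 ∂ℙ) atTop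
      (nhds (((1 - a ^ 2) ^ 2 / (1 - a ^ 4)) *
        ((∫ x, x ^ 4 ∂(minLaw lam)) +
          4 * (a * (1 + a + 2 * a ^ 2) / (1 - a ^ 3)) *
            (∫ x, x ^ 3 ∂(minLaw lam)) * (∫ x, x ∂(minLaw lam)) +
          6 * (a ^ 2 / (1 - a ^ 2)) * (∫ x, x ^ 2 ∂(minLaw lam)) ^ 2 +
          12 * (a ^ 3 * (1 + 2 * a + 3 * a ^ 2) / ((1 - a ^ 2) * (1 - a ^ 3))) *
            (∫ x, x ^ 2 ∂(minLaw lam)) * (∫ x, x ∂(minLaw lam)) ^ 2 +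
          24 * (a ^ 6 / ((1 - a) * (1 - a ^ 2) * (1 - a ^ 3))) *
            (∫ x, x ∂(minLaw lam)) ^ 4))) := by
  classical
  have ha0 : 0 < a := by rw [ha]; linarith
  have ha1 : a < 1 := by rw [ha]; linarith
  set b : ℝ := Real.sqrt (c * (2 - c)) with hbdef
  have hb2 : b ^ 2 = 1 - a ^ 2 := by
    rw [hbdef, Real.sq_sqrt (by nlinarith : (0:ℝ) ≤ c * (2 - c)), ha]; ring
  set i0 : Fin n := ⟨0, hn⟩ with hi0
  have hev : Measurable fun x : Fin n → ℝ => x i0 := measurable_pi_apply i0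
  -- rewritten recursion
  have hprec' : ∀ t ω i, p (t + 1) ω i = a * p t ω i + b * Z (t + 1) ω i := by
    intro t ω i; rw [hprec t ω i, ha]
  -- measurability of p
  have hpmeas : ∀ t, Measurable (p t) := by
    intro t
    induction t with
    | zero => rw [hp0]; exact hZmeas 0
    | succ t ih =>
      have hfun : p (t + 1) = fun ω i => a * p t ω i + b * Z (t + 1) ω i :=
        funext fun ω => funext fun i => hprec' t ω i
      rw [hfun]
      exact measurable_pi_lambda _ fun i =>
        (((measurable_pi_apply i).comp ih).const_mul a).add
          (((measurable_pi_apply i).comp (hZmeas (t + 1))).const_mul b)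
  -- closed form
  set coeff : ℕ → ℕ → ℝ := fun t s => if s = 0 then a ^ t else b * a ^ (t - s) with hcoeffdef
  have hcoeff : ∀ t s, s ≤ t → a * coeff t s = coeff (t + 1) s := by
    intro t s hs
    simp only [hcoeffdef]
    split_ifs
    · rw [pow_succ]; ring
    · rw [show t + 1 - s = (t - s) + 1 by omega, pow_succ]; ring
  have hclosed : ∀ t ω, p t ω = ∑ s ∈ Finset.range (t + 1), coeff t s • Z s ω := by
    intro t
    induction t with
    | zero =>
      intro ω
      simp [hp0, hcoeffdef]
    | succ t ih =>
      intro ω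
      funext i
      rw [hprec' t ω i, Finset.sum_apply, Finset.sum_range_succ]
      have hlast : (coeff (t + 1) (t + 1) • Z (t + 1) ω) i = b * Z (t + 1) ω i := by
        simp [hcoeffdef]
      rw [hlast]
      congr 1
      rw [ih ω, Finset.sum_apply, Finset.mul_sum]
      apply Finset.sum_congr rfl
      intro s hs
      have hs' : s ≤ t := Nat.lt_succ_iff.mp (Finset.mem_range.mp hs)
      simp only [Pi.smul_apply, smul_eq_mul]
      rw [← hcoeff t s hs']
      ring
  -- independence of p t and Z (t+1)
  have hindepP : ∀ t, IndepFun (p t) (Z (t + 1)) ℙ := by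
    intro t
    set g : ℕ → (Fin n → ℝ) → (Fin n → ℝ) :=
      fun s x => if s ≤ t then coeff t s • x else x with hgdef
    have hg : ∀ s, Measurable (g s) := by
      intro s
      simp only [hgdef]
      split_ifs
      · exact measurable_pi_lambda _ fun i =>
          (measurable_pi_apply i).const_smul _
      · exact measurable_id
    have hfam : iIndepFun (fun s => g s ∘ Z s) ℙ :=
      hZindep.comp g hg
    have hmeas' : ∀ s, Measurable (g s ∘ Z s) := fun s => (hg s).comp (hZmeas s)
    have hIF := hfam.indepFun_finsetSum_of_notMem hmeas'
      (s := Finset.range (t + 1)) (i := t + 1) (by simp)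
    have hg1 : g (t + 1) ∘ Z (t + 1) = Z (t + 1) := by
      funext ω
      simp only [Function.comp_apply, hgdef]
      rw [if_neg (by omega)]
    have hsum : (∑ s ∈ Finset.range (t + 1), g s ∘ Z s) = p t := by
      funext ω
      rw [Finset.sum_apply, hclosed t ω]
      apply Finset.sum_congr rfl
      intro s hs
      have hs' : s ≤ t := Nat.lt_succ_iff.mp (Finset.mem_range.mp hs)
      simp only [Function.comp_apply, hgdef, if_pos hs']
    rw [hg1, hsum] at hIF
    exact hIF
  -- scalar processes
  haveI hxiprob : ∀ i : Fin n, IsProbabilityMeasure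
      (if (i : ℕ) = 0 then minLaw lam else gaussianReal 0 1) := by
    intro i; split_ifs <;> infer_instance
  have hYlaw : ∀ t, Measure.map (fun ω => Z (t + 1) ω i0) ℙ = minLaw lam := by
    intro t
    have hcomp : (fun ω => Z (t + 1) ω i0) = (fun x : Fin n → ℝ => x i0) ∘ Z (t + 1) := rfl
    rw [hcomp, ← Measure.map_map hev (hZmeas (t + 1)), hZlaw t]
    unfold xiLaw
    rw [aux_pi_map_eval]
    simp [hi0]
  have hX0law : Measure.map (fun ω => p 0 ω i0) ℙ = gaussianReal 0 1 := by
    have hcomp : (fun ω => p 0 ω i0) = (fun x : Fin n → ℝ => x i0) ∘ Z 0 := by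
      rw [hp0]; rfl
    rw [hcomp, ← Measure.map_map hev (hZmeas 0), hZ0, aux_pi_map_eval]
  have hX0int : ∀ k, Integrable (fun ω => p 0 ω i0 ^ k) ℙ := by
    intro k
    have h := aux_integrable_pow_gaussian k
    rw [← hX0law] at h
    exact (integrable_map_measure (measurable_id'.pow_const k).aestronglyMeasurable
      (hev.comp (hpmeas 0)).aemeasurable).mp h
  exact aux_main a b ha0 ha1 hb2 (minLaw lam) (aux_integrable_pow_minLaw lam hlam)
    (fun t ω => p t ω i0) (fun t ω => Z (t + 1) ω i0)
    (fun t => hev.comp (hpmeas t)) (fun t => hev.comp (hZmeas (t + 1)))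
    hYlaw hX0int
    (fun t => (hindepP t).comp hev hev)
    (fun t ω => hprec' t ω i0)
end
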